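/- Data processing for smooth max-entropy (Lemma 4, second inequality): For any normalized state ρ on A⊗B⊗C (finite-dimensional systems) and any ε ≥ 0, H_max^ε(A|BC)_ρ ≤ H_max^ε(A|B)_ρ, where the right-hand side is evaluated on tr_C ρ. -/

import Mathlib

open scoped Kronecker ComplexOrder Classical
open Matrix

noncomputable section
namespace Paper

/-- A subnormalized state: positive semidefinite with trace at most one. -/
def IsSubState {A : Type*} [Fintype A] (ρ : Matrix A A ℂ) : Prop :=
  ρ.PosSemidef ∧ ρ.trace.re ≤ 1

/-- A normalized state: positive semidefinite with trace one. -/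
def IsState {A : Type*} [Fintype A] (ρ : Matrix A A ℂ) : Prop :=
  ρ.PosSemidef ∧ ρ.trace = 1

/-- The Löwner order: `ρ ≤ σ` iff `σ - ρ` is positive semidefinite. -/
def LoewnerLE {A : Type*} [Fintype A] (ρ σ : Matrix A A ℂ) : Prop :=
  (σ - ρ).PosSemidef

/-- Square root of a positive semidefinite matrix (junk value `0` otherwise). -/
def matSqrt {A : Type*} [Fintype A] [DecidableEq A] (M : Matrix A A ℂ) : Matrix A A ℂ :=
  if h : M.PosSemidef then
    (h.1.eigenvectorUnitary : Matrix A A ℂ) *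
      Matrix.diagonal (fun i => ((Real.sqrt (h.1.eigenvalues i) : ℝ) : ℂ)) *
      (star h.1.eigenvectorUnitary : Matrix A A ℂ)
  else 0

/-- Fidelity `F(ρ,σ) = tr √(√ρ σ √ρ)`. -/
def fid {A : Type*} [Fintype A] [DecidableEq A] (ρ σ : Matrix A A ℂ) : ℝ :=
  ((matSqrt (matSqrt ρ * σ * matSqrt ρ)).trace).re

/-- Generalized fidelity of subnormalized states. -/
def genFid {A : Type*} [Fintype A] [DecidableEq A] (ρ σ : Matrix A A ℂ) : ℝ :=
  fid ρ σ + Real.sqrt ((1 - ρ.trace.re) * (1 - σ.trace.re))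

/-- Purified distance `P(ρ,σ) = √(1 - F̄(ρ,σ)²)`. -/
def pDist {A : Type*} [Fintype A] [DecidableEq A] (ρ σ : Matrix A A ℂ) : ℝ :=
  Real.sqrt (1 - (genFid ρ σ)^2)

/-- Conditional min-entropy `H_min(A|B)_ρ` for a bipartite (sub)state on `A ⊗ B`. -/
def Hmin {A B : Type*} [Fintype A] [DecidableEq A] [Fintype B] [DecidableEq B]
    (ρ : Matrix (A × B) (A × B) ℂ) : ℝ :=
  sSup {l : ℝ | ∃ σ : Matrix B B ℂ, IsState σ ∧
    LoewnerLE ρ (((2:ℝ) ^ (-l)) • ((1 : Matrix A A ℂ) ⊗ₖ σ))}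

/-- Conditional max-entropy `H_max(A|B)_ρ = 2 log₂ sup_σ F(ρ, 1⊗σ)`. -/
def Hmax {A B : Type*} [Fintype A] [DecidableEq A] [Fintype B] [DecidableEq B]
    (ρ : Matrix (A × B) (A × B) ℂ) : ℝ :=
  2 * Real.logb 2
    (sSup {f : ℝ | ∃ σ : Matrix B B ℂ, IsState σ ∧ f = fid ρ ((1 : Matrix A A ℂ) ⊗ₖ σ)})

/-- Smooth conditional min-entropy. -/
def sHmin {A B : Type*} [Fintype A] [DecidableEq A] [Fintype B] [DecidableEq B]
    (ε : ℝ) (ρ : Matrix (A × B) (A × B) ℂ) : ℝ :=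
  sSup {h : ℝ | ∃ ρ' : Matrix (A × B) (A × B) ℂ,
    IsSubState ρ' ∧ pDist ρ' ρ ≤ ε ∧ h = Hmin ρ'}

/-- Smooth conditional max-entropy. -/
def sHmax {A B : Type*} [Fintype A] [DecidableEq A] [Fintype B] [DecidableEq B]
    (ε : ℝ) (ρ : Matrix (A × B) (A × B) ℂ) : ℝ :=
  sInf {h : ℝ | ∃ ρ' : Matrix (A × B) (A × B) ℂ,
    IsSubState ρ' ∧ pDist ρ' ρ ≤ ε ∧ h = Hmax ρ'}

/-- Partial trace over the second tensor factor. -/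
def ptraceSnd {A B : Type*} [Fintype B] (ρ : Matrix (A × B) (A × B) ℂ) : Matrix A A ℂ :=
  Matrix.of fun a a' => ∑ b, ρ (a, b) (a', b)

/-- Partial trace over the first tensor factor. -/
def ptraceFst {A B : Type*} [Fintype A] (ρ : Matrix (A × B) (A × B) ℂ) : Matrix B B ℂ :=
  Matrix.of fun b b' => ∑ a, ρ (a, b) (a, b')

/-- Von Neumann entropy (base-2), via eigenvalues of a Hermitian matrix. -/
def vN {A : Type*} [Fintype A] [DecidableEq A] (ρ : Matrix A A ℂ) : ℝ :=
  if h : ρ.IsHermitian then -∑ i, (h.eigenvalues i) * Real.logb 2 (h.eigenvalues i) else 0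

/-- Conditional von Neumann entropy `S(A|B)_ρ = S(ρ) - S(ρ^B)`. -/
def condEnt {A B : Type*} [Fintype A] [DecidableEq A] [Fintype B] [DecidableEq B]
    (ρ : Matrix (A × B) (A × B) ℂ) : ℝ :=
  vN ρ - vN (ptraceFst ρ)

/-- The n-fold tensor power of a bipartite state, as a state on `A^n ⊗ B^n`. -/
def powState {A B : Type*} (ρ : Matrix (A × B) (A × B) ℂ) (n : ℕ) :
    Matrix ((Fin n → A) × (Fin n → B)) ((Fin n → A) × (Fin n → B)) ℂ :=
  Matrix.of fun p q => ∏ i, ρ (p.1 i, p.2 i) (q.1 i, q.2 i)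



section Wiretap

variable {𝓧 B E F : Type*} [Fintype 𝓧] [DecidableEq 𝓧]
  [Fintype B] [DecidableEq B] [Fintype E] [DecidableEq E] [Fintype F] [DecidableEq F]

/-- The i.i.d. output state `ρ_{x^n}^{B^n E^n}` on `B^n ⊗ E^n` for input word `xs`. -/
def rhoWord (W : 𝓧 → Matrix (B × E) (B × E) ℂ) {n : ℕ} (xs : Fin n → 𝓧) :
    Matrix ((Fin n → B) × (Fin n → E)) ((Fin n → B) × (Fin n → E)) ℂ :=
  Matrix.of fun p q => ∏ i, W (xs i) (p.1 i, p.2 i) (q.1 i, q.2 i)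

/-- `tr_B [ρ (D ⊗ 1)]` for a bipartite operator `ρ` on `B⊗E` and `D` on `B`. -/
def condOut {BB EE : Type*} [Fintype BB] [Fintype EE]
    (ρ : Matrix (BB × EE) (BB × EE) ℂ) (D : Matrix BB BB ℂ) : Matrix EE EE ℂ :=
  Matrix.of fun e e' => ∑ b, ∑ b', ρ (b, e) (b', e') * D b' b

/-- The reduced state `ρ^{UÛ}` of the code. -/
def rhoUU (W : 𝓧 → Matrix (B × E) (B × E) ℂ) (n M : ℕ)
    (Enc : Fin M → (Fin n → 𝓧) → ℝ)
    (D : Fin M → Matrix (Fin n → B) (Fin n → B) ℂ) :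
    Matrix (Fin M × Fin M) (Fin M × Fin M) ℂ :=
  Matrix.of fun p q => if p = q then
    (M : ℂ)⁻¹ * ∑ xs, (Enc p.1 xs : ℂ) * (condOut (rhoWord W xs) (D p.2)).trace
  else 0

/-- The reduced state `ρ^{U E^n}` of the code. -/
def rhoUE (W : 𝓧 → Matrix (B × E) (B × E) ℂ) (n M : ℕ)
    (Enc : Fin M → (Fin n → 𝓧) → ℝ) :
    Matrix (Fin M × (Fin n → E)) (Fin M × (Fin n → E)) ℂ :=
  Matrix.of fun p q => if p.1 = q.1 then
    (M : ℂ)⁻¹ * ∑ xs, (Enc p.1 xs : ℂ) * (ptraceFst (rhoWord W xs)) p.2 q.2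
  else 0

/-- The maximally correlated state `Δ^{UÛ} = (1/M) ∑_u |u⟩⟨u| ⊗ |u⟩⟨u|`. -/
def DeltaUU (M : ℕ) : Matrix (Fin M × Fin M) (Fin M × Fin M) ℂ :=
  Matrix.of fun p q => if p = q ∧ p.1 = p.2 then (M : ℂ)⁻¹ else 0

/-- `Δ^U ⊗ σ`, with `Δ^U` the maximally mixed state on `Fin M`. -/
def DeltaTensor {EE : Type*} (M : ℕ) (σ : Matrix EE EE ℂ) :
    Matrix (Fin M × EE) (Fin M × EE) ℂ :=
  Matrix.of fun p q => if p.1 = q.1 then (M : ℂ)⁻¹ * σ p.2 q.2 else 0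

/-- An `n`-block wiretap code with `M` messages, transmission error `ε`, privacy error `δ`. -/
def IsCode (W : 𝓧 → Matrix (B × E) (B × E) ℂ) (n M : ℕ) (ε δ : ℝ)
    (Enc : Fin M → (Fin n → 𝓧) → ℝ)
    (D : Fin M → Matrix (Fin n → B) (Fin n → B) ℂ) : Prop :=
  (∀ u, (∀ xs, 0 ≤ Enc u xs) ∧ (∑ xs, Enc u xs) = 1) ∧
  (∀ u, (D u).PosSemidef) ∧ (∑ u, D u) = 1 ∧
  pDist (rhoUU W n M Enc D) (DeltaUU M) ≤ ε ∧
  (∃ σ : Matrix (Fin n → E) (Fin n → E) ℂ, IsState σ ∧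
    pDist (rhoUE W n M Enc) (DeltaTensor M σ) ≤ δ)

/-- `M(n,ε,δ)`: the largest number of messages of an `n`-block code with errors `ε, δ`. -/
def Mmax (W : 𝓧 → Matrix (B × E) (B × E) ℂ) (n : ℕ) (ε δ : ℝ) : ℕ :=
  sSup {M : ℕ | ∃ (Enc : Fin M → (Fin n → 𝓧) → ℝ)
    (D : Fin M → Matrix (Fin n → B) (Fin n → B) ℂ), IsCode W n M ε δ Enc D}

/-- Conditional mutual information `I(X:F|E')` of a state on `X ⊗ ((E'⊗F) ⊗ E)`
(the trailing system `E` is traced out). -/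
def cmi3 {X E F E2 : Type*} [Fintype X] [DecidableEq X] [Fintype E] [DecidableEq E]
    [Fintype F] [DecidableEq F] [Fintype E2]
    (σ : Matrix (X × (E × F) × E2) (X × (E × F) × E2) ℂ) : ℝ :=
  vN (Matrix.of fun (p q : X × E) => ∑ f, ∑ e2, σ (p.1, (p.2, f), e2) (q.1, (q.2, f), e2))
  + vN (Matrix.of fun (p q : E × F) => ∑ x, ∑ e2, σ (x, p, e2) (x, q, e2))
  - vN (Matrix.of fun (e e' : E) => ∑ x, ∑ f, ∑ e2, σ (x, (e, f), e2) (x, (e', f), e2))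
  - vN (Matrix.of fun (p q : X × E × F) => ∑ e2, σ (p.1, p.2, e2) (q.1, q.2, e2))

/-- The state `ρ^{X E' F E} = ∑_x P(x) |x⟩⟨x| ⊗ (V⊗1) ρ_x^{BE} (V⊗1)†`. -/
def rhoXEFE (W : 𝓧 → Matrix (B × E) (B × E) ℂ) (V : Matrix (E × F) B ℂ) (P : 𝓧 → ℝ) :
    Matrix (𝓧 × (E × F) × E) (𝓧 × (E × F) × E) ℂ :=
  Matrix.of fun p q => if p.1 = q.1 then
    (P p.1 : ℂ) *
      ((V ⊗ₖ (1 : Matrix E E ℂ)) * W p.1 * (V ⊗ₖ (1 : Matrix E E ℂ))ᴴ) p.2 q.2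
  else 0

/-- `P*(W) = max_{P_X} I(X:F|E')`. -/
def Pstar (W : 𝓧 → Matrix (B × E) (B × E) ℂ) (V : Matrix (E × F) B ℂ) : ℝ :=
  sSup {r : ℝ | ∃ P : 𝓧 → ℝ, (∀ x, 0 ≤ P x) ∧ (∑ x, P x) = 1 ∧ r = cmi3 (rhoXEFE W V P)}

/-- Degradedness of the wiretap channel `W`, witnessed by a Stinespring
isometry `V : B → E' ⊗ F` of the degrading map. -/
def DegradedVia (W : 𝓧 → Matrix (B × E) (B × E) ℂ) (V : Matrix (E × F) B ℂ) : Prop :=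
  Vᴴ * V = 1 ∧ ∀ x, ptraceSnd (V * ptraceSnd (W x) * Vᴴ) = ptraceFst (W x)

end Wiretap


section Extras

/-- `id_A ⊗ 𝒟` applied to a bipartite operator, for `𝒟` given by Kraus operators `K i`. -/
def idChan {A B C ι : Type*} [Fintype ι] [Fintype B]
    (K : ι → Matrix C B ℂ) (ρ : Matrix (A × B) (A × B) ℂ) : Matrix (A × C) (A × C) ℂ :=
  Matrix.of fun p q => ∑ i, ∑ b, ∑ b', K i p.2 b * ρ (p.1, b) (q.1, b') * star (K i q.2 b')

/-- Moore–Penrose pseudoinverse of a Hermitian matrix (junk value `0` otherwise). -/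
def pinv {A : Type*} [Fintype A] [DecidableEq A] (M : Matrix A A ℂ) : Matrix A A ℂ :=
  if h : M.IsHermitian then
    (h.eigenvectorUnitary : Matrix A A ℂ) *
      Matrix.diagonal (fun i => ((h.eigenvalues i)⁻¹ : ℂ)) *
      star (h.eigenvectorUnitary : Matrix A A ℂ)
  else 0

/-- Operator norm of a matrix, acting on Euclidean space. -/
def opNorm {A : Type*} [Fintype A] [DecidableEq A] (M : Matrix A A ℂ) : ℝ :=
  ‖Matrix.toEuclideanCLM (𝕜 := ℂ) M‖

/-- The type class `τ(P₀)` of length-`n` words of type `P₀`. -/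
def typeClass {𝓧 : Type*} [Fintype 𝓧] [DecidableEq 𝓧] (n : ℕ) (P0 : 𝓧 → ℝ) :
    Set (Fin n → 𝓧) :=
  {xs | ∀ x, ((Finset.univ.filter fun i => xs i = x).card : ℝ) = n * P0 x}

/-- Holevo capacity of the cq channel `x ↦ Wb x`. -/
def holevoCap {𝓧 B : Type*} [Fintype 𝓧] [Fintype B] [DecidableEq B]
    (Wb : 𝓧 → Matrix B B ℂ) : ℝ :=
  sSup {r : ℝ | ∃ P : 𝓧 → ℝ, (∀ x, 0 ≤ P x) ∧ (∑ x, P x) = 1 ∧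
    r = vN (∑ x, (P x : ℝ) • Wb x) - ∑ x, P x * vN (Wb x)}

end Extras

set_option linter.unusedSectionVars false

section AuxMatSqrtCFC
open scoped MatrixOrder
variable {n : Type*} [Fintype n] [DecidableEq n] {m : Type*} [Fintype m] [DecidableEq m]

lemma matSqrt_eq_cfcSqrt {M : Matrix n n ℂ} (h : M.PosSemidef) : matSqrt M = CFC.sqrt M := by
  have h0 : (0 : Matrix n n ℂ) ≤ M := Matrix.nonneg_iff_posSemidef.mpr h
  rw [CFC.sqrt_eq_real_sqrt M h0, cfcₙ_eq_cfc (hf0 := Real.sqrt_zero), h.1.cfc_eq,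
    IsHermitian.cfc, Unitary.conjStarAlgAut_apply, matSqrt, dif_pos h]
  rfl

lemma matSqrt_psd_aux {M : Matrix n n ℂ} (h : M.PosSemidef) : (matSqrt M).PosSemidef := by
  rw [matSqrt_eq_cfcSqrt h]
  exact Matrix.nonneg_iff_posSemidef.mp (CFC.sqrt_nonneg M)

lemma matSqrt_mul_self_aux {M : Matrix n n ℂ} (h : M.PosSemidef) :
    matSqrt M * matSqrt M = M := by
  rw [matSqrt_eq_cfcSqrt h]
  exact CFC.sqrt_mul_sqrt_self M (Matrix.nonneg_iff_posSemidef.mpr h)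

lemma matSqrt_eq_of_aux {M Q : Matrix n n ℂ} (h : M.PosSemidef) (hQ : Q.PosSemidef)
    (hQQ : Q * Q = M) : matSqrt M = Q := by
  rw [matSqrt_eq_cfcSqrt h]
  exact CFC.sqrt_unique hQQ (Matrix.nonneg_iff_posSemidef.mpr hQ)

end AuxMatSqrtCFC

section AuxBasic

variable {n : Type*} [Fintype n] [DecidableEq n] {m : Type*} [Fintype m] [DecidableEq m]

lemma psd_diag_re_nonneg {M : Matrix n n ℂ} (h : M.PosSemidef) (i : n) : 0 ≤ (M i i).re := by
  have := h.re_dotProduct_nonneg (Pi.single i 1)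
  simpa [dotProduct, Matrix.mulVec, Pi.single_apply, Finset.sum_ite_eq,
    Finset.sum_ite_eq'] using this

lemma psd_trace_re_nonneg {M : Matrix n n ℂ} (h : M.PosSemidef) : 0 ≤ M.trace.re := by
  rw [Matrix.trace, Complex.re_sum]
  exact Finset.sum_nonneg fun i _ => psd_diag_re_nonneg h i

lemma loewner_trace_mono {A B : Matrix n n ℂ} (h : (B - A).PosSemidef) :
    A.trace.re ≤ B.trace.re := by
  have := psd_trace_re_nonneg h
  rw [Matrix.trace_sub, Complex.sub_re] at this
  linarith

lemma trace_conj_mono {S S' : Matrix n n ℂ} (h : (S' - S).PosSemidef) (A : Matrix n m ℂ) :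
    ((Aᴴ * S * A).trace).re ≤ ((Aᴴ * S' * A).trace).re := by
  apply loewner_trace_mono
  have heq : Aᴴ * S' * A - Aᴴ * S * A = Aᴴ * (S' - S) * A := by
    rw [Matrix.mul_sub, Matrix.sub_mul]
  rw [heq]
  exact h.conjTranspose_mul_mul_same A

lemma trace_conjTranspose_mul_self_re (X : Matrix m n ℂ) :
    ((Xᴴ * X).trace).re = ∑ p : m × n, ‖X p.1 p.2‖ ^ 2 := by
  simp only [Matrix.trace, Matrix.diag_apply, Matrix.mul_apply, Matrix.conjTranspose_apply]
  rw [Complex.re_sum, Fintype.sum_prod_type_right]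
  congr 1; ext j
  rw [Complex.re_sum]
  congr 1; ext i
  rw [Complex.sq_norm, Complex.normSq_apply, Complex.star_def,
    Complex.mul_re, Complex.conj_re, Complex.conj_im]
  ring

lemma psd_eq_zero_of_trace {M : Matrix n n ℂ} (h : M.PosSemidef) (ht : M.trace.re = 0) :
    M = 0 := by
  have hs := matSqrt_mul_self_aux h
  have hherm : (matSqrt M)ᴴ = matSqrt M := (matSqrt_psd_aux h).1
  have h2 : (((matSqrt M)ᴴ * matSqrt M).trace).re = 0 := by rw [hherm, hs, ht]
  rw [trace_conjTranspose_mul_self_re] at h2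
  have hz : matSqrt M = 0 := by
    ext i j
    have : ∀ p ∈ Finset.univ, (0:ℝ) ≤ ‖matSqrt M (p : n × n).1 p.2‖ ^ 2 := by
      intro p _; positivity
    have := (Finset.sum_eq_zero_iff_of_nonneg this).mp h2 (i, j) (Finset.mem_univ _)
    simpa using this
  rw [← hs, hz, Matrix.mul_zero]

lemma trace_cs (X Y : Matrix m n ℂ) :
    ‖(Xᴴ * Y).trace‖ ≤
      Real.sqrt (((Xᴴ * X).trace).re) * Real.sqrt (((Yᴴ * Y).trace).re) := by
  classical
  let f : EuclideanSpace ℂ (m × n) := WithLp.toLp 2 (fun p : m × n => X p.1 p.2)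
  let g : EuclideanSpace ℂ (m × n) := WithLp.toLp 2 (fun p : m × n => Y p.1 p.2)
  have h1 : (Xᴴ * Y).trace = inner ℂ f g := by
    simp only [Matrix.trace, Matrix.diag_apply, Matrix.mul_apply, Matrix.conjTranspose_apply,
      PiLp.inner_apply, RCLike.inner_apply]
    rw [Fintype.sum_prod_type]
    rw [Finset.sum_comm]
    apply Finset.sum_congr rfl; intro i _
    apply Finset.sum_congr rfl; intro j _
    exact mul_comm _ _
  have h2 : Real.sqrt (((Xᴴ * X).trace).re) = ‖f‖ := by
    rw [trace_conjTranspose_mul_self_re, EuclideanSpace.norm_eq]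
  have h3 : Real.sqrt (((Yᴴ * Y).trace).re) = ‖g‖ := by
    rw [trace_conjTranspose_mul_self_re, EuclideanSpace.norm_eq]
  rw [h1, h2, h3]
  exact norm_inner_le_norm f g

end AuxBasic
section AuxSqrt

variable {n : Type*} [Fintype n] [DecidableEq n] {m : Type*} [Fintype m] [DecidableEq m]

lemma matSqrt_psd {M : Matrix n n ℂ} (h : M.PosSemidef) : (matSqrt M).PosSemidef := by
  exact matSqrt_psd_aux h

lemma matSqrt_herm {M : Matrix n n ℂ} (h : M.PosSemidef) : (matSqrt M)ᴴ = matSqrt M :=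
  (matSqrt_psd h).1

lemma matSqrt_mul_self {M : Matrix n n ℂ} (h : M.PosSemidef) : matSqrt M * matSqrt M = M := by
  exact matSqrt_mul_self_aux h

lemma matSqrt_unique {M Q : Matrix n n ℂ} (hQ : Q.PosSemidef) (hQQ : Q * Q = M) :
    matSqrt M = Q := by
  have hM : M.PosSemidef := by
    rw [← hQQ, ← pow_two]; exact hQ.pow 2
  exact matSqrt_eq_of_aux hM hQ hQQ

lemma matSqrt_zero : matSqrt (0 : Matrix n n ℂ) = 0 :=
  matSqrt_unique (Matrix.PosSemidef.zero) (by simp)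

lemma psd_smul {M : Matrix n n ℂ} (h : M.PosSemidef) {c : ℝ} (hc : 0 ≤ c) :
    ((c : ℂ) • M).PosSemidef := by
  constructor
  · show ((c : ℂ) • M)ᴴ = (c : ℂ) • M
    rw [Matrix.conjTranspose_smul, h.1.eq]
    congr 1
    simp [Complex.star_def, Complex.conj_ofReal]
  · exact (h.smul (Complex.zero_le_real.mpr hc)).2

lemma matSqrt_smul {M : Matrix n n ℂ} (h : M.PosSemidef) {c : ℝ} (hc : 0 ≤ c) :
    matSqrt ((c : ℂ) • M) = ((Real.sqrt c : ℝ) : ℂ) • matSqrt M := by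
  apply matSqrt_unique (psd_smul (matSqrt_psd h) (Real.sqrt_nonneg c))
  rw [Matrix.smul_mul, Matrix.mul_smul, smul_smul, matSqrt_mul_self h,
    ← Complex.ofReal_mul, Real.mul_self_sqrt hc]

/-- A Hermitian idempotent is PSD and dominated by `1`. -/
lemma proj_psd {E : Matrix n n ℂ} (hh : Eᴴ = E) (hi : E * E = E) : E.PosSemidef := by
  have : E = Eᴴ * E := by rw [hh, hi]
  rw [this]; exact Matrix.posSemidef_conjTranspose_mul_self E

lemma proj_le_one {E : Matrix n n ℂ} (hh : Eᴴ = E) (hi : E * E = E) :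
    ((1 : Matrix n n ℂ) - E).PosSemidef := by
  have hh' : ((1 : Matrix n n ℂ) - E)ᴴ = 1 - E := by
    rw [Matrix.conjTranspose_sub, Matrix.conjTranspose_one, hh]
  have hi' : ((1 : Matrix n n ℂ) - E) * (1 - E) = 1 - E := by
    rw [Matrix.mul_sub, Matrix.sub_mul, Matrix.sub_mul, hi]
    simp
  exact proj_psd hh' hi'

/-- If `(1 - Π) (M Mᴴ) (1 - Π)ᴴ = 0` then `Π M = M`. -/
lemma absorb {P : Matrix n n ℂ} {M : Matrix n m ℂ}
    (h : ((1 : Matrix n n ℂ) - P) * (M * Mᴴ) * ((1 : Matrix n n ℂ) - P)ᴴ = 0) :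
    P * M = M := by
  have h2 : (((1 : Matrix n n ℂ) - P) * M) * (((1 : Matrix n n ℂ) - P) * M)ᴴ = 0 := by
    rw [Matrix.conjTranspose_mul]
    calc ((1 : Matrix n n ℂ) - P) * M * (Mᴴ * (1-P)ᴴ)
        = ((1 : Matrix n n ℂ) - P) * (M * Mᴴ) * (1-P)ᴴ := by
          simp only [Matrix.mul_assoc]
      _ = 0 := h
  have h3 := Matrix.self_mul_conjTranspose_eq_zero.mp h2
  have h4 : M - P * M = 0 := by
    rwa [Matrix.sub_mul, Matrix.one_mul] at h3
  exact (sub_eq_zero.mp h4).symm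

/-- Support/pseudoinverse package for a PSD matrix. -/
structure SuppPack (P : Matrix n n ℂ) where
  Q : Matrix n n ℂ
  Pi : Matrix n n ℂ
  hQ : Qᴴ = Q
  hPi : Piᴴ = Pi
  idem : Pi * Pi = Pi
  PiP : Pi * P = P
  PPi : P * Pi = P
  QP : Q * P = Pi
  PQ : P * Q = Pi
  PiQ : Pi * Q = Q
  QPi : Q * Pi = Q

lemma exists_suppPack {P : Matrix n n ℂ} (hP : P.PosSemidef) : Nonempty (SuppPack P) := by
  classical
  obtain ⟨hH, -⟩ := hP
  set U : Matrix n n ℂ := (hH.eigenvectorUnitary : Matrix n n ℂ) with hUdef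
  have hUU : (star U) * U = 1 := Matrix.mem_unitaryGroup_iff'.mp hH.eigenvectorUnitary.2
  set lam := hH.eigenvalues with hlamdef
  set l : n → ℂ := RCLike.ofReal ∘ lam with hldef
  have hspec : P = U * Matrix.diagonal l * (star U) := hH.spectral_theorem
  set g : n → ℂ := fun i => if lam i = 0 then 0 else ((lam i : ℂ))⁻¹ with hgdef
  set e : n → ℂ := fun i => if lam i = 0 then 0 else 1 with hedef
  have key : ∀ f₁ f₂ : n → ℂ,
      (U * Matrix.diagonal f₁ * (star U)) * (U * Matrix.diagonal f₂ * (star U))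
        = U * Matrix.diagonal (f₁ * f₂) * (star U) := by
    intro f₁ f₂
    calc (U * Matrix.diagonal f₁ * (star U)) * (U * Matrix.diagonal f₂ * (star U))
        = U * Matrix.diagonal f₁ * ((star U) * U) * Matrix.diagonal f₂ * (star U) := by
          simp only [Matrix.mul_assoc]
      _ = U * Matrix.diagonal (f₁ * f₂) * (star U) := by
          rw [hUU, Matrix.mul_one, Matrix.mul_assoc U, Matrix.diagonal_mul_diagonal]
          simp only [Matrix.mul_assoc]
          rfl
  have herm : ∀ f : n → ℂ, (∀ i, star (f i) = f i) →
      (U * Matrix.diagonal f * (star U))ᴴ = U * Matrix.diagonal f * (star U) := by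
    intro f hf
    have hsf : star f = f := funext hf
    have hdf : (Matrix.diagonal f)ᴴ = Matrix.diagonal f := by
      rw [Matrix.diagonal_conjTranspose, hsf]
    calc (U * Matrix.diagonal f * (star U))ᴴ
        = (star U)ᴴ * ((Matrix.diagonal f)ᴴ * Uᴴ) := by
          rw [Matrix.conjTranspose_mul, Matrix.conjTranspose_mul]
      _ = U * Matrix.diagonal f * (star U) := by
          rw [hdf, show (star U)ᴴ = U from by
              rw [Matrix.star_eq_conjTranspose, Matrix.conjTranspose_conjTranspose],
            show Uᴴ = star U from (Matrix.star_eq_conjTranspose U).symm, Matrix.mul_assoc]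
  have hilam : ∀ i, l i = ((lam i : ℝ) : ℂ) := fun i => rfl
  have hee : e * e = e := by
    funext i; simp only [Pi.mul_apply, hedef]; split <;> simp
  have hel : e * l = l := by
    funext i; simp only [Pi.mul_apply, hedef]
    split
    · rw [hilam i, ‹lam i = 0›]; simp
    · rw [one_mul]
  have hle : l * e = l := by
    funext i; simp only [Pi.mul_apply, hedef]
    split
    · rw [hilam i, ‹lam i = 0›]; simp
    · rw [mul_one]
  have hgl : g * l = e := by
    funext i; simp only [Pi.mul_apply, hgdef, hedef, hilam]
    split
    · simp
    · rw [inv_mul_cancel₀ (by exact_mod_cast ‹¬ lam i = 0›)]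
  have hlg : l * g = e := by
    funext i; simp only [Pi.mul_apply, hgdef, hedef, hilam]
    split
    · simp
    · rw [mul_inv_cancel₀ (by exact_mod_cast ‹¬ lam i = 0›)]
  have heg : e * g = g := by
    funext i; simp only [Pi.mul_apply, hgdef, hedef]; split <;> simp
  have hge : g * e = g := by
    funext i; simp only [Pi.mul_apply, hgdef, hedef]; split <;> simp
  refine ⟨⟨U * Matrix.diagonal g * (star U), U * Matrix.diagonal e * (star U),
    ?_, ?_, ?_, ?_, ?_, ?_, ?_, ?_, ?_⟩⟩
  · apply herm
    intro i
    simp only [hgdef]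
    split
    · simp
    · rw [← Complex.ofReal_inv, Complex.star_def, Complex.conj_ofReal]
  · apply herm
    intro i
    simp only [hedef]
    split <;> simp
  · rw [key, hee]
  · rw [hspec, key, hel]
  · rw [hspec, key, hle]
  · rw [hspec, key, hgl]
  · rw [hspec, key, hlg]
  · rw [key, heg]
  · rw [key, hge]

end AuxSqrt
section AuxMaster

variable {X : Type*} [Fintype X] [DecidableEq X] {R₁ : Type*} [Fintype R₁] [DecidableEq R₁]
  {R₂ : Type*} [Fintype R₂] [DecidableEq R₂]

/-- `K` is a contraction: `KᴴK ≤ 1`. -/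
def Ctr {a b : Type*} [Fintype a] [Fintype b] [DecidableEq b] (K : Matrix a b ℂ) : Prop :=
  ((1 : Matrix b b ℂ) - Kᴴ * K).PosSemidef

lemma ctr_one {a : Type*} [Fintype a] [DecidableEq a] : Ctr (1 : Matrix a a ℂ) := by
  unfold Ctr
  simpa using Matrix.PosSemidef.zero

lemma ctr_mul {a b c : Type*} [Fintype a] [Fintype b] [DecidableEq b] [Fintype c]
    [DecidableEq c] {K : Matrix a b ℂ} {L : Matrix b c ℂ} (hK : Ctr K) (hL : Ctr L) :
    Ctr (K * L) := by
  unfold Ctr at *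
  have expand : Lᴴ * ((1 : Matrix b b ℂ) - Kᴴ * K) * L = Lᴴ * L - (K * L)ᴴ * (K * L) := by
    rw [Matrix.mul_sub, Matrix.mul_one, Matrix.sub_mul, Matrix.conjTranspose_mul]
    congr 1
    simp only [Matrix.mul_assoc]
  have final : (1 : Matrix c c ℂ) - (K * L)ᴴ * (K * L)
      = Lᴴ * ((1 : Matrix b b ℂ) - Kᴴ * K) * L + ((1 : Matrix c c ℂ) - Lᴴ * L) := by
    rw [expand]; abel
  rw [final]
  exact (hK.conjTranspose_mul_mul_same L).add hL

lemma absorb_sandwich {Pi P : Matrix X X ℂ} (hz : ((1 : Matrix X X ℂ) - Pi) * P = 0)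
    {m' : Type*} [Fintype m'] (Z : Matrix X m' ℂ) (B : Matrix X X ℂ)
    (hZ : Z * Zᴴ = P * B * Pᴴ) : Pi * Z = Z := by
  apply absorb
  calc ((1 : Matrix X X ℂ) - Pi) * (Z * Zᴴ) * ((1 : Matrix X X ℂ) - Pi)ᴴ
      = (((1 : Matrix X X ℂ) - Pi) * P) * (B * (Pᴴ * ((1 : Matrix X X ℂ) - Pi)ᴴ)) := by
        rw [hZ]; simp only [Matrix.mul_assoc]
    _ = 0 := by rw [hz, Matrix.zero_mul]

lemma one_sub_proj_mul {P Pi : Matrix X X ℂ} (h : Pi * P = P) :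
    ((1 : Matrix X X ℂ) - Pi) * P = 0 := by
  rw [Matrix.sub_mul, Matrix.one_mul, h, sub_self]

lemma fid_eq_trace_P (M : Matrix X R₁ ℂ) (N : Matrix X R₂ ℂ) :
    fid (M * Mᴴ) (N * Nᴴ)
      = ((matSqrt ((matSqrt (M * Mᴴ) * N) * (matSqrt (M * Mᴴ) * N)ᴴ)).trace).re := by
  unfold fid
  congr 3
  rw [Matrix.conjTranspose_mul, matSqrt_herm (Matrix.posSemidef_self_mul_conjTranspose M)]
  simp only [Matrix.mul_assoc]

lemma master_ub (M : Matrix X R₁ ℂ) (N : Matrix X R₂ ℂ) {K : Matrix R₂ R₁ ℂ} (hK : Ctr K) :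
    ((Mᴴ * N * K).trace).re ≤ fid (M * Mᴴ) (N * Nᴴ) := by
  classical
  rw [fid_eq_trace_P M N]
  have hρ : (M * Mᴴ).PosSemidef := Matrix.posSemidef_self_mul_conjTranspose M
  set Pr := matSqrt (M * Mᴴ) with hPrdef
  have hPrpsd : Pr.PosSemidef := matSqrt_psd hρ
  have hPrherm : Prᴴ = Pr := matSqrt_herm hρ
  have hPr2 : Pr * Pr = M * Mᴴ := matSqrt_mul_self hρ
  set C := Pr * N with hCdef
  have hCC : (C * Cᴴ).PosSemidef := Matrix.posSemidef_self_mul_conjTranspose C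
  set P := matSqrt (C * Cᴴ) with hPdef
  have hPpsd : P.PosSemidef := matSqrt_psd hCC
  have hPherm : Pᴴ = P := matSqrt_herm hCC
  have hP2 : P * P = C * Cᴴ := matSqrt_mul_self hCC
  set G := matSqrt P with hGdef
  have hGpsd : G.PosSemidef := matSqrt_psd hPpsd
  have hGherm : Gᴴ = G := matSqrt_herm hPpsd
  have hG2 : G * G = P := matSqrt_mul_self hPpsd
  obtain ⟨pr⟩ := exists_suppPack hPrpsd
  obtain ⟨pp⟩ := exists_suppPack hPpsd
  have hPiM : pr.Pi * M = M := by
    apply absorb_sandwich (one_sub_proj_mul pr.PiP) M (1 : Matrix X X ℂ)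
    rw [Matrix.mul_one, hPrherm, hPr2]
  have hPpC : pp.Pi * C = C := by
    apply absorb_sandwich (one_sub_proj_mul pp.PiP) C (1 : Matrix X X ℂ)
    rw [Matrix.mul_one, hPherm, hP2]
  set Wm := pr.Q * M with hWmdef
  set Wc := pp.Q * C with hWcdef
  have hMfac : Pr * Wm = M := by
    rw [hWmdef, ← Matrix.mul_assoc, pr.PQ, hPiM]
  have hCfac : P * Wc = C := by
    rw [hWcdef, ← Matrix.mul_assoc, pp.PQ, hPpC]
  have hWmWm : Wm * Wmᴴ = pr.Pi := by
    have hWmT : Wmᴴ = Mᴴ * pr.Q := by rw [hWmdef, Matrix.conjTranspose_mul, pr.hQ]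
    rw [hWmdef, hWmT]
    calc pr.Q * M * (Mᴴ * pr.Q) = pr.Q * (M * Mᴴ) * pr.Q := by simp only [Matrix.mul_assoc]
      _ = pr.Q * (Pr * Pr) * pr.Q := by rw [hPr2]
      _ = (pr.Q * Pr) * (Pr * pr.Q) := by simp only [Matrix.mul_assoc]
      _ = pr.Pi * pr.Pi := by rw [pr.QP, pr.PQ]
      _ = pr.Pi := pr.idem
  have hWcWc : Wc * Wcᴴ = pp.Pi := by
    have hWcT : Wcᴴ = Cᴴ * pp.Q := by rw [hWcdef, Matrix.conjTranspose_mul, pp.hQ]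
    rw [hWcdef, hWcT]
    calc pp.Q * C * (Cᴴ * pp.Q) = pp.Q * (C * Cᴴ) * pp.Q := by simp only [Matrix.mul_assoc]
      _ = pp.Q * (P * P) * pp.Q := by rw [← hP2]
      _ = (pp.Q * P) * (P * pp.Q) := by simp only [Matrix.mul_assoc]
      _ = pp.Pi * pp.Pi := by rw [pp.QP, pp.PQ]
      _ = pp.Pi := pp.idem
  have hEMherm : (Wmᴴ * Wm)ᴴ = Wmᴴ * Wm := by
    rw [Matrix.conjTranspose_mul, Matrix.conjTranspose_conjTranspose]
  have hEMidem : (Wmᴴ * Wm) * (Wmᴴ * Wm) = Wmᴴ * Wm := by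
    have hPiWm : pr.Pi * Wm = Wm := by
      rw [hWmdef, ← Matrix.mul_assoc, pr.PiQ]
    calc (Wmᴴ * Wm) * (Wmᴴ * Wm) = Wmᴴ * (Wm * Wmᴴ) * Wm := by simp only [Matrix.mul_assoc]
      _ = Wmᴴ * pr.Pi * Wm := by rw [hWmWm]
      _ = Wmᴴ * (pr.Pi * Wm) := by simp only [Matrix.mul_assoc]
      _ = Wmᴴ * Wm := by rw [hPiWm]
  have hECherm : (Wcᴴ * Wc)ᴴ = Wcᴴ * Wc := by
    rw [Matrix.conjTranspose_mul, Matrix.conjTranspose_conjTranspose]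
  have hECidem : (Wcᴴ * Wc) * (Wcᴴ * Wc) = Wcᴴ * Wc := by
    have hPiWc : pp.Pi * Wc = Wc := by
      rw [hWcdef, ← Matrix.mul_assoc, pp.PiQ]
    calc (Wcᴴ * Wc) * (Wcᴴ * Wc) = Wcᴴ * (Wc * Wcᴴ) * Wc := by simp only [Matrix.mul_assoc]
      _ = Wcᴴ * pp.Pi * Wc := by rw [hWcWc]
      _ = Wcᴴ * (pp.Pi * Wc) := by simp only [Matrix.mul_assoc]
      _ = Wcᴴ * Wc := by rw [hPiWc]
  set Y := Wc * (K * (Wmᴴ * G)) with hYdef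
  have htr : (Mᴴ * N * K).trace = (Gᴴ * Y).trace := by
    have hmat : Mᴴ * N * K = Wmᴴ * (G * (G * (Wc * K))) := by
      have hMH : Mᴴ = Wmᴴ * Pr := by
        rw [← hMfac, Matrix.conjTranspose_mul, hPrherm]
      calc Mᴴ * N * K = Wmᴴ * ((Pr * N) * K) := by rw [hMH]; simp only [Matrix.mul_assoc]
        _ = Wmᴴ * ((P * Wc) * K) := by rw [← hCdef, hCfac]
        _ = Wmᴴ * ((G * G * Wc) * K) := by rw [hG2]
        _ = Wmᴴ * (G * (G * (Wc * K))) := by simp only [Matrix.mul_assoc]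
    rw [hmat, Matrix.trace_mul_comm]
    have hmat2 : (G * (G * (Wc * K))) * Wmᴴ = G * (G * (Wc * (K * Wmᴴ))) := by
      simp only [Matrix.mul_assoc]
    rw [hmat2, Matrix.trace_mul_comm, hGherm]
    congr 1
    simp only [Matrix.mul_assoc]
    rw [hYdef]
  -- bound the Hilbert-Schmidt norm of Y
  have hYbound : ((Yᴴ * Y).trace).re ≤ (P.trace).re := by
    set A₁ := K * (Wmᴴ * G) with hA₁def
    have hYY : Yᴴ * Y = A₁ᴴ * (Wcᴴ * Wc) * A₁ := by
      rw [hYdef, Matrix.conjTranspose_mul]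
      simp only [Matrix.mul_assoc]
    have step1 : ((Yᴴ * Y).trace).re ≤ ((A₁ᴴ * A₁).trace).re := by
      rw [hYY]
      have := trace_conj_mono (proj_le_one hECherm hECidem) A₁
      rwa [Matrix.mul_one] at this
    set B₁ := Wmᴴ * G with hB₁def
    have hAA : A₁ᴴ * A₁ = B₁ᴴ * (Kᴴ * K) * B₁ := by
      rw [hA₁def, Matrix.conjTranspose_mul]
      simp only [Matrix.mul_assoc]
    have step2 : ((A₁ᴴ * A₁).trace).re ≤ ((B₁ᴴ * B₁).trace).re := by
      rw [hAA]
      have := trace_conj_mono hK B₁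
      rwa [Matrix.mul_one] at this
    have hBB : B₁ᴴ * B₁ = Gᴴ * pr.Pi * G := by
      calc B₁ᴴ * B₁ = (Gᴴ * Wm) * (Wmᴴ * G) := by
            rw [hB₁def, Matrix.conjTranspose_mul, Matrix.conjTranspose_conjTranspose]
        _ = Gᴴ * (Wm * Wmᴴ) * G := by simp only [Matrix.mul_assoc]
        _ = Gᴴ * pr.Pi * G := by rw [hWmWm]
    have step3 : ((B₁ᴴ * B₁).trace).re ≤ (P.trace).re := by
      rw [hBB, hGherm]
      have h1 := trace_conj_mono (proj_le_one pr.hPi pr.idem) G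
      rw [Matrix.mul_one, hGherm, hG2] at h1
      exact h1
    linarith
  have hGG : Gᴴ * G = P := by rw [hGherm, hG2]
  have hPtr : 0 ≤ (P.trace).re := psd_trace_re_nonneg hPpsd
  calc ((Mᴴ * N * K).trace).re = ((Gᴴ * Y).trace).re := by rw [htr]
    _ ≤ ‖(Gᴴ * Y).trace‖ := Complex.re_le_norm _
    _ ≤ Real.sqrt (((Gᴴ * G).trace).re) * Real.sqrt (((Yᴴ * Y).trace).re) := trace_cs G Y
    _ ≤ Real.sqrt ((P.trace).re) * Real.sqrt ((P.trace).re) := by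
        rw [hGG]
        exact mul_le_mul_of_nonneg_left (Real.sqrt_le_sqrt hYbound) (Real.sqrt_nonneg _)
    _ = (P.trace).re := Real.mul_self_sqrt hPtr

lemma master_ach (M : Matrix X R₁ ℂ) (N : Matrix X R₂ ℂ) :
    ∃ K : Matrix R₂ R₁ ℂ, Ctr K ∧ ((Mᴴ * N * K).trace).re = fid (M * Mᴴ) (N * Nᴴ) := by
  classical
  rw [fid_eq_trace_P M N]
  have hρ : (M * Mᴴ).PosSemidef := Matrix.posSemidef_self_mul_conjTranspose M
  set Pr := matSqrt (M * Mᴴ) with hPrdef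
  have hPrpsd : Pr.PosSemidef := matSqrt_psd hρ
  have hPrherm : Prᴴ = Pr := matSqrt_herm hρ
  have hPr2 : Pr * Pr = M * Mᴴ := matSqrt_mul_self hρ
  set C := Pr * N with hCdef
  have hCC : (C * Cᴴ).PosSemidef := Matrix.posSemidef_self_mul_conjTranspose C
  set P := matSqrt (C * Cᴴ) with hPdef
  have hPpsd : P.PosSemidef := matSqrt_psd hCC
  have hPherm : Pᴴ = P := matSqrt_herm hCC
  have hP2 : P * P = C * Cᴴ := matSqrt_mul_self hCC
  obtain ⟨pr⟩ := exists_suppPack hPrpsd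
  obtain ⟨pp⟩ := exists_suppPack hPpsd
  have hPiM : pr.Pi * M = M := by
    apply absorb_sandwich (one_sub_proj_mul pr.PiP) M (1 : Matrix X X ℂ)
    rw [Matrix.mul_one, hPrherm, hPr2]
  have hPiP : pr.Pi * P = P := by
    apply absorb_sandwich (one_sub_proj_mul pr.PiP) P (N * Nᴴ)
    rw [hPherm, hP2, hPrherm, hCdef, Matrix.conjTranspose_mul, hPrherm]
    simp only [Matrix.mul_assoc]
  set Wm := pr.Q * M with hWmdef
  have hMfac : Pr * Wm = M := by
    rw [hWmdef, ← Matrix.mul_assoc, pr.PQ, hPiM]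
  have hWmWm : Wm * Wmᴴ = pr.Pi := by
    have hWmT : Wmᴴ = Mᴴ * pr.Q := by rw [hWmdef, Matrix.conjTranspose_mul, pr.hQ]
    rw [hWmdef, hWmT]
    calc pr.Q * M * (Mᴴ * pr.Q) = pr.Q * (M * Mᴴ) * pr.Q := by simp only [Matrix.mul_assoc]
      _ = pr.Q * (Pr * Pr) * pr.Q := by rw [hPr2]
      _ = (pr.Q * Pr) * (Pr * pr.Q) := by simp only [Matrix.mul_assoc]
      _ = pr.Pi * pr.Pi := by rw [pr.QP, pr.PQ]
      _ = pr.Pi := pr.idem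
  have hEMherm : (Wmᴴ * Wm)ᴴ = Wmᴴ * Wm := by
    rw [Matrix.conjTranspose_mul, Matrix.conjTranspose_conjTranspose]
  have hEMidem : (Wmᴴ * Wm) * (Wmᴴ * Wm) = Wmᴴ * Wm := by
    have hPiWm : pr.Pi * Wm = Wm := by
      rw [hWmdef, ← Matrix.mul_assoc, pr.PiQ]
    calc (Wmᴴ * Wm) * (Wmᴴ * Wm) = Wmᴴ * (Wm * Wmᴴ) * Wm := by simp only [Matrix.mul_assoc]
      _ = Wmᴴ * pr.Pi * Wm := by rw [hWmWm]
      _ = Wmᴴ * (pr.Pi * Wm) := by simp only [Matrix.mul_assoc]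
      _ = Wmᴴ * Wm := by rw [hPiWm]
  refine ⟨Cᴴ * pp.Q * Wm, ?_, ?_⟩
  · -- contraction
    unfold Ctr
    set K := Cᴴ * pp.Q * Wm with hKdef
    have hKK : Kᴴ * K = Wmᴴ * pp.Pi * Wm := by
      have hKT : Kᴴ = Wmᴴ * (pp.Q * C) := by
        rw [hKdef]
        simp only [Matrix.conjTranspose_mul, Matrix.conjTranspose_conjTranspose, pp.hQ,
          Matrix.mul_assoc]
      rw [hKT, hKdef]
      calc Wmᴴ * (pp.Q * C) * (Cᴴ * pp.Q * Wm)
          = Wmᴴ * (pp.Q * (C * Cᴴ) * pp.Q) * Wm := by simp only [Matrix.mul_assoc]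
        _ = Wmᴴ * (pp.Q * (P * P) * pp.Q) * Wm := by rw [← hP2]
        _ = Wmᴴ * ((pp.Q * P) * (P * pp.Q)) * Wm := by simp only [Matrix.mul_assoc]
        _ = Wmᴴ * (pp.Pi * pp.Pi) * Wm := by rw [pp.QP, pp.PQ]
        _ = Wmᴴ * pp.Pi * Wm := by rw [pp.idem, Matrix.mul_assoc]
    have hsplit : (1 : Matrix R₁ R₁ ℂ) - Kᴴ * K
        = Wmᴴ * ((1 : Matrix X X ℂ) - pp.Pi) * Wm + ((1 : Matrix R₁ R₁ ℂ) - Wmᴴ * Wm) := by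
      rw [hKK, Matrix.mul_sub, Matrix.mul_one, Matrix.sub_mul]
      abel
    rw [hsplit]
    exact ((proj_le_one pp.hPi pp.idem).conjTranspose_mul_mul_same Wm).add
      (proj_le_one hEMherm hEMidem)
  · -- the value
    have hMH : Mᴴ = Wmᴴ * Pr := by
      rw [← hMfac, Matrix.conjTranspose_mul, hPrherm]
    have hmat : Mᴴ * N * (Cᴴ * pp.Q * Wm) = Wmᴴ * (P * Wm) := by
      calc Mᴴ * N * (Cᴴ * pp.Q * Wm)
          = Wmᴴ * ((Pr * N) * Cᴴ * pp.Q * Wm) := by rw [hMH]; simp only [Matrix.mul_assoc]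
        _ = Wmᴴ * ((C * Cᴴ) * pp.Q * Wm) := by rw [← hCdef]
        _ = Wmᴴ * ((P * P) * pp.Q * Wm) := by rw [← hP2]
        _ = Wmᴴ * (P * (P * pp.Q) * Wm) := by simp only [Matrix.mul_assoc]
        _ = Wmᴴ * (P * pp.Pi * Wm) := by rw [pp.PQ]
        _ = Wmᴴ * (P * Wm) := by rw [pp.PPi]
    rw [hmat]
    have htr : (Wmᴴ * (P * Wm)).trace = P.trace := by
      rw [Matrix.trace_mul_comm]
      have : P * Wm * Wmᴴ = P * pr.Pi := by rw [Matrix.mul_assoc, hWmWm]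
      rw [this]
      have hPPi : P * pr.Pi = P := by
        have : (P * pr.Pi)ᴴ = P := by
          rw [Matrix.conjTranspose_mul, pr.hPi, hPherm, hPiP]
        calc P * pr.Pi = ((P * pr.Pi)ᴴ)ᴴ := by rw [Matrix.conjTranspose_conjTranspose]
          _ = Pᴴ := by rw [this]
          _ = P := hPherm
      rw [hPPi]
    rw [htr]

end AuxMaster
section AuxFid

variable {n : Type*} [Fintype n] [DecidableEq n]

lemma sq_fac {ρ : Matrix n n ℂ} (hρ : ρ.PosSemidef) : matSqrt ρ * (matSqrt ρ)ᴴ = ρ := by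
  rw [matSqrt_herm hρ, matSqrt_mul_self hρ]

lemma inner_psd {ρ σ : Matrix n n ℂ} (hσ : σ.PosSemidef) :
    (matSqrt ρ * σ * matSqrt ρ).PosSemidef := by
  by_cases hρ : ρ.PosSemidef
  · have := hσ.mul_mul_conjTranspose_same (matSqrt ρ)
    rwa [matSqrt_herm hρ] at this
  · rw [matSqrt, dif_neg hρ]
    simpa using Matrix.PosSemidef.zero

lemma fid_nonneg {ρ σ : Matrix n n ℂ} (hσ : σ.PosSemidef) : 0 ≤ fid ρ σ :=
  psd_trace_re_nonneg (matSqrt_psd (inner_psd hσ))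

lemma fid_self {ρ : Matrix n n ℂ} (hρ : ρ.PosSemidef) : fid ρ ρ = ρ.trace.re := by
  unfold fid
  have hin : matSqrt ρ * ρ * matSqrt ρ = ρ * ρ := by
    calc matSqrt ρ * ρ * matSqrt ρ
        = matSqrt ρ * (matSqrt ρ * matSqrt ρ) * matSqrt ρ := by rw [matSqrt_mul_self hρ]
      _ = (matSqrt ρ * matSqrt ρ) * (matSqrt ρ * matSqrt ρ) := by simp only [Matrix.mul_assoc]
      _ = ρ * ρ := by rw [matSqrt_mul_self hρ]
  rw [hin, matSqrt_unique hρ rfl]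

lemma fid_zero_left (σ : Matrix n n ℂ) : fid 0 σ = 0 := by
  unfold fid
  rw [matSqrt_zero, Matrix.zero_mul, Matrix.mul_zero, matSqrt_zero]
  simp

lemma fid_smul_left {ρ σ : Matrix n n ℂ} (hρ : ρ.PosSemidef) (hσ : σ.PosSemidef)
    {c : ℝ} (hc : 0 ≤ c) : fid ((c : ℂ) • ρ) σ = Real.sqrt c * fid ρ σ := by
  unfold fid
  rw [matSqrt_smul hρ hc]
  have hin : ((Real.sqrt c : ℝ) : ℂ) • matSqrt ρ * σ * ((Real.sqrt c : ℝ) : ℂ) • matSqrt ρ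
      = (c : ℂ) • (matSqrt ρ * σ * matSqrt ρ) := by
    rw [Matrix.smul_mul, Matrix.mul_smul, Matrix.smul_mul, smul_smul, ← Complex.ofReal_mul,
      Real.mul_self_sqrt hc]
  rw [hin, matSqrt_smul (inner_psd hσ) hc, Matrix.trace_smul, smul_eq_mul]
  rw [Complex.re_ofReal_mul]

lemma fid_smul_one_right {ρ : Matrix n n ℂ} (hρ : ρ.PosSemidef) {c : ℝ} (hc : 0 ≤ c) :
    fid ρ ((c : ℂ) • (1 : Matrix n n ℂ)) = Real.sqrt c * ((matSqrt ρ).trace).re := by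
  unfold fid
  have hin : matSqrt ρ * ((c : ℂ) • (1 : Matrix n n ℂ)) * matSqrt ρ = (c : ℂ) • ρ := by
    rw [Matrix.mul_smul, Matrix.mul_one, Matrix.smul_mul, matSqrt_mul_self hρ]
  rw [hin, matSqrt_smul hρ hc, Matrix.trace_smul, smul_eq_mul, Complex.re_ofReal_mul]

lemma psd_le_trace_smul_one {σ : Matrix n n ℂ} (hσ : σ.PosSemidef) :
    (((σ.trace.re : ℝ) : ℂ) • (1 : Matrix n n ℂ) - σ).PosSemidef := by
  classical
  obtain ⟨hH, -⟩ := id hσ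
  set U : Matrix n n ℂ := (hH.eigenvectorUnitary : Matrix n n ℂ) with hUdef
  have hUU : (star U) * U = 1 := Matrix.mem_unitaryGroup_iff'.mp hH.eigenvectorUnitary.2
  have hUU' : U * (star U) = 1 := Matrix.mem_unitaryGroup_iff.mp hH.eigenvectorUnitary.2
  set lam := hH.eigenvalues with hlamdef
  set l : n → ℂ := RCLike.ofReal ∘ lam with hldef
  have hspec : σ = U * Matrix.diagonal l * (star U) := hH.spectral_theorem
  set c : ℝ := σ.trace.re with hcdef
  have htrace : σ.trace = ∑ i, l i := by
    rw [hspec, Matrix.trace_mul_cycle, hUU, Matrix.one_mul, Matrix.trace_diagonal]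
  have hc : c = ∑ i, lam i := by
    rw [hcdef, htrace, Complex.re_sum]
    rfl
  have key : ((c : ℝ) : ℂ) • (1 : Matrix n n ℂ) - σ
      = U * Matrix.diagonal (fun i => ((c - lam i : ℝ) : ℂ)) * (star U) := by
    have hdiag : Matrix.diagonal (fun i => ((c - lam i : ℝ) : ℂ))
        = ((c : ℝ) : ℂ) • (1 : Matrix n n ℂ) - Matrix.diagonal l := by
      ext i j
      rcases eq_or_ne i j with rfl | h
      · simp [Matrix.diagonal_apply_eq, hldef, Complex.ofReal_sub, Matrix.one_apply_eq,
          Matrix.sub_apply, Matrix.smul_apply, smul_eq_mul]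
      · simp [Matrix.diagonal_apply_ne _ h, Matrix.one_apply_ne h, Matrix.sub_apply,
          Matrix.smul_apply]
    rw [hdiag, Matrix.mul_sub, Matrix.sub_mul, ← hspec, Matrix.mul_smul, Matrix.mul_one,
      Matrix.smul_mul, hUU']
  rw [key]
  have hd : (Matrix.diagonal (fun i => ((c - lam i : ℝ) : ℂ))).PosSemidef := by
    rw [Matrix.posSemidef_diagonal_iff]
    intro i
    rw [Complex.zero_le_real, sub_nonneg, hc]
    exact Finset.single_le_sum (fun j _ => hσ.eigenvalues_nonneg j) (Finset.mem_univ i)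
  have hfin := hd.mul_mul_conjTranspose_same U
  rwa [← Matrix.star_eq_conjTranspose] at hfin

lemma sqrt_trace_le_trace_matSqrt {ρ : Matrix n n ℂ} (hρ : ρ.PosSemidef) :
    Real.sqrt (ρ.trace.re) ≤ ((matSqrt ρ).trace).re := by
  set S := matSqrt ρ with hSdef
  have hS : S.PosSemidef := matSqrt_psd hρ
  set c : ℝ := S.trace.re with hcdef
  have hc0 : 0 ≤ c := psd_trace_re_nonneg hS
  set G := matSqrt S with hGdef
  have hGherm : Gᴴ = G := matSqrt_herm hS
  have hG2 : G * G = S := matSqrt_mul_self hS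
  have h1 := trace_conj_mono (psd_le_trace_smul_one hS) G
  have hL : Gᴴ * S * G = ρ := by
    calc Gᴴ * S * G = G * (G * G) * G := by rw [hGherm, hG2]
      _ = (G * G) * (G * G) := by simp only [Matrix.mul_assoc]
      _ = ρ := by rw [hG2, matSqrt_mul_self hρ]
  have hR : Gᴴ * (((c : ℝ) : ℂ) • (1 : Matrix n n ℂ)) * G = ((c : ℝ) : ℂ) • S := by
    rw [Matrix.mul_smul, Matrix.mul_one, Matrix.smul_mul, hGherm, hG2]
  rw [hL, hR, Matrix.trace_smul, smul_eq_mul, Complex.re_ofReal_mul] at h1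
  have h2 := Real.sqrt_le_sqrt h1
  rwa [Real.sqrt_mul_self hc0] at h2

lemma fid_le {ρ σ : Matrix n n ℂ} (hρ : ρ.PosSemidef) (hσ : σ.PosSemidef) :
    fid ρ σ ≤ Real.sqrt (ρ.trace.re) * Real.sqrt (σ.trace.re) := by
  obtain ⟨K, hK, hval⟩ := master_ach (matSqrt ρ) (matSqrt σ)
  rw [sq_fac hρ, sq_fac hσ] at hval
  rw [← hval]
  set M := matSqrt ρ with hMdef
  set N := matSqrt σ with hNdef
  have hpair : (Mᴴ * N * K).trace = ((M * Kᴴ)ᴴ * N).trace := by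
    rw [Matrix.conjTranspose_mul, Matrix.conjTranspose_conjTranspose]
    rw [Matrix.trace_mul_comm]
    congr 1
    simp only [Matrix.mul_assoc]
  have hNN : Nᴴ * N = σ := by rw [matSqrt_herm hσ, matSqrt_mul_self hσ]
  have hMK : (((M * Kᴴ)ᴴ * (M * Kᴴ)).trace).re ≤ ρ.trace.re := by
    have hstep : ((M * Kᴴ)ᴴ * (M * Kᴴ)).trace = (Mᴴᴴ * (Kᴴ * K) * Mᴴ).trace := by
      rw [Matrix.conjTranspose_mul, Matrix.conjTranspose_conjTranspose]
      rw [Matrix.trace_mul_comm]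
      congr 1
      simp only [Matrix.mul_assoc, Matrix.conjTranspose_conjTranspose]
    rw [hstep, Matrix.conjTranspose_conjTranspose]
    have h2 := trace_conj_mono hK Mᴴ
    rw [Matrix.mul_one, Matrix.conjTranspose_conjTranspose] at h2
    rwa [sq_fac hρ] at h2
  calc ((Mᴴ * N * K).trace).re ≤ ‖((M * Kᴴ)ᴴ * N).trace‖ := by
        rw [hpair]; exact Complex.re_le_norm _
    _ ≤ Real.sqrt ((((M * Kᴴ)ᴴ * (M * Kᴴ)).trace).re) * Real.sqrt (((Nᴴ * N).trace).re) :=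
        trace_cs _ N
    _ ≤ Real.sqrt (ρ.trace.re) * Real.sqrt (σ.trace.re) := by
        rw [hNN]
        exact mul_le_mul_of_nonneg_right (Real.sqrt_le_sqrt hMK) (Real.sqrt_nonneg _)

end AuxFid
section AuxPtr

variable {A : Type*} [Fintype A] [DecidableEq A] {B : Type*} [Fintype B] [DecidableEq B]
  {C : Type*} [Fintype C] [DecidableEq C]

/-- Partial trace over the last tensor factor of `A ⊗ B ⊗ C`. -/
def ptrC (τ : Matrix (A × B × C) (A × B × C) ℂ) : Matrix (A × B) (A × B) ℂ :=
  Matrix.of fun p q => ∑ c, τ (p.1, p.2, c) (q.1, q.2, c)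

/-- Partial trace over the second factor of `B ⊗ C`. -/
def ptrC2 (σ : Matrix (B × C) (B × C) ℂ) : Matrix B B ℂ :=
  Matrix.of fun b b' => ∑ c, σ (b, c) (b', c)

/-- Reshaping `Matrix (A×B×C) R` to `Matrix (A×B) (C×R)`. -/
def resh {R : Type*} (M : Matrix (A × B × C) R ℂ) : Matrix (A × B) (C × R) ℂ :=
  Matrix.of fun p q => M (p.1, p.2, q.1) q.2

/-- Reshaping `Matrix (B×C) R` to `Matrix B (C×R)`. -/
def resh2 {R : Type*} (M : Matrix (B × C) R ℂ) : Matrix B (C × R) ℂ :=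
  Matrix.of fun b q => M (b, q.1) q.2

lemma resh_mul_conjT {R : Type*} [Fintype R] (M N : Matrix (A × B × C) R ℂ) :
    resh M * (resh N)ᴴ = ptrC (M * Nᴴ) := by
  ext p q
  simp only [ptrC, resh, Matrix.mul_apply, Matrix.conjTranspose_apply, Matrix.of_apply]
  rw [Fintype.sum_prod_type]

lemma resh2_mul_conjT {R : Type*} [Fintype R] (M N : Matrix (B × C) R ℂ) :
    resh2 M * (resh2 N)ᴴ = ptrC2 (M * Nᴴ) := by
  ext p q
  simp only [ptrC2, resh2, Matrix.mul_apply, Matrix.conjTranspose_apply, Matrix.of_apply]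
  rw [Fintype.sum_prod_type]

lemma ptrC_psd {ρ : Matrix (A × B × C) (A × B × C) ℂ} (hρ : ρ.PosSemidef) :
    (ptrC ρ).PosSemidef := by
  have h : ptrC ρ = resh (matSqrt ρ) * (resh (matSqrt ρ))ᴴ := by
    rw [resh_mul_conjT, sq_fac hρ]
  rw [h]
  exact Matrix.posSemidef_self_mul_conjTranspose _

lemma ptrC2_psd {σ : Matrix (B × C) (B × C) ℂ} (hσ : σ.PosSemidef) :
    (ptrC2 σ).PosSemidef := by
  have h : ptrC2 σ = resh2 (matSqrt σ) * (resh2 (matSqrt σ))ᴴ := by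
    rw [resh2_mul_conjT, sq_fac hσ]
  rw [h]
  exact Matrix.posSemidef_self_mul_conjTranspose _

lemma trace_ptrC (ρ : Matrix (A × B × C) (A × B × C) ℂ) : (ptrC ρ).trace = ρ.trace := by
  simp only [Matrix.trace, Matrix.diag_apply, ptrC, Matrix.of_apply]
  rw [← Fintype.sum_prod_type']
  exact Fintype.sum_equiv ⟨fun x => (x.1.1, x.1.2, x.2), fun y => ((y.1, y.2.1), y.2.2),
    fun x => rfl, fun y => rfl⟩ _ _ (fun x => rfl)

lemma trace_ptrC2 (σ : Matrix (B × C) (B × C) ℂ) : (ptrC2 σ).trace = σ.trace := by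
  simp only [Matrix.trace, Matrix.diag_apply, ptrC2, Matrix.of_apply]
  rw [← Fintype.sum_prod_type']

lemma ptrC_kron (σ : Matrix (B × C) (B × C) ℂ) :
    ptrC ((1 : Matrix A A ℂ) ⊗ₖ σ) = (1 : Matrix A A ℂ) ⊗ₖ ptrC2 σ := by
  ext p q
  simp only [ptrC, ptrC2, Matrix.kroneckerMap_apply, Matrix.of_apply]
  exact (Finset.mul_sum Finset.univ (fun c => σ (p.2, c) (q.2, c))
    ((1 : Matrix A A ℂ) p.1 q.1)).symm

lemma kron_one_conjT {α : Type*} [Fintype α] [DecidableEq α] {σ : Matrix B B ℂ}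
    (hσ : σᴴ = σ) : ((1 : Matrix α α ℂ) ⊗ₖ σ)ᴴ = (1 : Matrix α α ℂ) ⊗ₖ σ := by
  ext x y
  simp only [Matrix.conjTranspose_apply, Matrix.kroneckerMap_apply]
  rw [star_mul']
  congr 1
  · by_cases h : y.1 = x.1
    · rw [h]
      simp [Matrix.one_apply_eq]
    · rw [Matrix.one_apply_ne h, Matrix.one_apply_ne (Ne.symm h)]
      simp
  · rw [← Matrix.conjTranspose_apply, hσ]

lemma psd_one_kron {α : Type*} [Fintype α] [DecidableEq α] {σ : Matrix B B ℂ}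
    (hσ : σ.PosSemidef) : ((1 : Matrix α α ℂ) ⊗ₖ σ).PosSemidef := by
  have h1 : (1 : Matrix α α ℂ) ⊗ₖ σ
      = ((1 : Matrix α α ℂ) ⊗ₖ matSqrt σ) * ((1 : Matrix α α ℂ) ⊗ₖ matSqrt σ)ᴴ := by
    rw [kron_one_conjT (matSqrt_herm hσ), ← Matrix.mul_kronecker_mul, Matrix.one_mul,
      matSqrt_mul_self hσ]
  rw [h1]
  exact Matrix.posSemidef_self_mul_conjTranspose _

lemma trace_one_kron {α : Type*} [Fintype α] [DecidableEq α] (σ : Matrix B B ℂ) :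
    ((1 : Matrix α α ℂ) ⊗ₖ σ).trace = (Fintype.card α : ℂ) * σ.trace := by
  simp only [Matrix.trace, Matrix.diag_apply, Matrix.kroneckerMap_apply]
  rw [Fintype.sum_prod_type]
  simp only [Matrix.one_apply_eq, one_mul]
  rw [Finset.sum_const, Finset.card_univ, nsmul_eq_mul]

end AuxPtr
section AuxDpi

variable {A : Type*} [Fintype A] [DecidableEq A] {B : Type*} [Fintype B] [DecidableEq B]
  {C : Type*} [Fintype C] [DecidableEq C]

lemma sum_resh_P {R R' : Type*} [Fintype R] [Fintype R']
    (M : Matrix (A × B × C) R ℂ) (N : Matrix (A × B × C) R' ℂ) (r : R) (r' : R') :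
    ∑ c, ((resh M)ᴴ * resh N) (c, r) (c, r') = (Mᴴ * N) r r' := by
  simp only [Matrix.mul_apply, Matrix.conjTranspose_apply, resh, Matrix.of_apply]
  rw [← Fintype.sum_prod_type']
  exact Fintype.sum_equiv ⟨fun x => (x.2.1, x.2.2, x.1), fun y => (y.2.2, (y.1, y.2.1)),
    fun x => rfl, fun y => rfl⟩ _ _ (fun x => rfl)

lemma trace_resh {R R' : Type*} [Fintype R] [DecidableEq R] [Fintype R'] [DecidableEq R']
    (M : Matrix (A × B × C) R ℂ) (N : Matrix (A × B × C) R' ℂ) (K : Matrix R' R ℂ) :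
    ((resh M)ᴴ * resh N * ((1 : Matrix C C ℂ) ⊗ₖ K)).trace = (Mᴴ * N * K).trace := by
  classical
  have hcollapse : ∀ x : C × R,
      ((resh M)ᴴ * resh N * ((1 : Matrix C C ℂ) ⊗ₖ K)) x x
        = ∑ r', ((resh M)ᴴ * resh N) x (x.1, r') * K r' x.2 := by
    intro x
    rw [Matrix.mul_apply, Fintype.sum_prod_type]
    have hk : ∀ (c' : C) (r' : R'),
        ((1 : Matrix C C ℂ) ⊗ₖ K) (c', r') x = if c' = x.1 then K r' x.2 else 0 := by
      intro c' r'
      simp only [Matrix.kroneckerMap_apply, Matrix.one_apply]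
      split <;> simp
    simp only [hk, mul_ite, mul_zero]
    rw [Finset.sum_comm]
    refine Finset.sum_congr rfl fun r' _ => ?_
    rw [Finset.sum_ite_eq' Finset.univ x.1
      (fun c' => ((resh M)ᴴ * resh N) x (c', r') * K r' x.2)]
    simp
  rw [Matrix.trace, Matrix.trace]
  simp only [Matrix.diag_apply]
  calc ∑ x : C × R, ((resh M)ᴴ * resh N * ((1 : Matrix C C ℂ) ⊗ₖ K)) x x
      = ∑ x : C × R, ∑ r', ((resh M)ᴴ * resh N) x (x.1, r') * K r' x.2 :=
        Finset.sum_congr rfl fun x _ => hcollapse x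
    _ = ∑ c, ∑ r, ∑ r', ((resh M)ᴴ * resh N) (c, r) (c, r') * K r' r := by
        rw [Fintype.sum_prod_type]
    _ = ∑ r, ∑ r', (∑ c, ((resh M)ᴴ * resh N) (c, r) (c, r')) * K r' r := by
        rw [Finset.sum_comm]
        refine Finset.sum_congr rfl fun r _ => ?_
        rw [Finset.sum_comm]
        refine Finset.sum_congr rfl fun r' _ => ?_
        rw [Finset.sum_mul]
    _ = ∑ r, ∑ r', (Mᴴ * N) r r' * K r' r := by
        refine Finset.sum_congr rfl fun r _ => Finset.sum_congr rfl fun r' _ => ?_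
        rw [sum_resh_P]
    _ = ∑ r, (Mᴴ * N * K) r r := by
        refine Finset.sum_congr rfl fun r _ => ?_
        rw [Matrix.mul_apply]

lemma kron_one_conjT' {α R R' : Type*} [Fintype α] [DecidableEq α] [Fintype R] [Fintype R']
    (K : Matrix R R' ℂ) : ((1 : Matrix α α ℂ) ⊗ₖ K)ᴴ = (1 : Matrix α α ℂ) ⊗ₖ Kᴴ := by
  ext x y
  simp only [Matrix.conjTranspose_apply, Matrix.kroneckerMap_apply]
  rw [star_mul']
  congr 1
  by_cases h : y.1 = x.1
  · rw [h]; simp [Matrix.one_apply_eq]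
  · rw [Matrix.one_apply_ne h, Matrix.one_apply_ne (Ne.symm h)]; simp

lemma ctr_one_kron {α R R' : Type*} [Fintype α] [DecidableEq α] [Fintype R] [DecidableEq R]
    [Fintype R'] [DecidableEq R'] {K : Matrix R R' ℂ} (hK : Ctr K) :
    Ctr ((1 : Matrix α α ℂ) ⊗ₖ K) := by
  unfold Ctr at *
  have h1 : ((1 : Matrix α α ℂ) ⊗ₖ K)ᴴ * ((1 : Matrix α α ℂ) ⊗ₖ K)
      = (1 : Matrix α α ℂ) ⊗ₖ (Kᴴ * K) := by
    rw [kron_one_conjT', ← Matrix.mul_kronecker_mul, Matrix.one_mul]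
  have h2 : (1 : Matrix α α ℂ) ⊗ₖ ((1 : Matrix R' R' ℂ) - Kᴴ * K)
      = (1 : Matrix (α × R') (α × R') ℂ) - (1 : Matrix α α ℂ) ⊗ₖ (Kᴴ * K) := by
    rw [← Matrix.one_kronecker_one (α := ℂ) (m := α) (n := R')]
    ext x y
    rcases x with ⟨x1, x2⟩
    rcases y with ⟨y1, y2⟩
    by_cases hh1 : x1 = y1 <;> by_cases hh2 : x2 = y2 <;>
      simp [Matrix.kroneckerMap_apply, Matrix.sub_apply, mul_sub, Matrix.one_apply,
        Prod.ext_iff, hh1, hh2]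
  rw [h1, ← h2]
  exact psd_one_kron hK

lemma fid_dpi {ρ σ : Matrix (A × B × C) (A × B × C) ℂ} (hρ : ρ.PosSemidef)
    (hσ : σ.PosSemidef) : fid ρ σ ≤ fid (ptrC ρ) (ptrC σ) := by
  obtain ⟨K, hK, hval⟩ := master_ach (matSqrt ρ) (matSqrt σ)
  rw [sq_fac hρ, sq_fac hσ] at hval
  have hub := master_ub (resh (matSqrt ρ)) (resh (matSqrt σ)) (ctr_one_kron (α := C) hK)
  rw [resh_mul_conjT, resh_mul_conjT, sq_fac hρ, sq_fac hσ, trace_resh] at hub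
  rw [← hval]
  exact hub

lemma trace_unresh {R : Type*} [Fintype R] (T' : Matrix (A × B) (C × R) ℂ)
    (M : Matrix (A × B × C) R ℂ) :
    (((Matrix.of fun (y : A × B × C) (r : R) => T' (y.1, y.2.1) (y.2.2, r)))ᴴ * M).trace
      = (T'ᴴ * resh M).trace := by
  simp only [Matrix.trace, Matrix.diag_apply, Matrix.mul_apply, Matrix.conjTranspose_apply,
    Matrix.of_apply, resh]
  rw [← Fintype.sum_prod_type']
  rw [← Fintype.sum_prod_type']
  exact Fintype.sum_equiv
    ⟨fun x => ((x.2.2.2, x.1), (x.2.1, x.2.2.1)), fun z => (z.1.2, (z.2.1, z.2.2, z.1.1)),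
      fun x => rfl, fun z => rfl⟩ _ _ (fun x => rfl)

lemma fid_mono_left {n : Type*} [Fintype n] [DecidableEq n] {ρ₁ ρ₂ τ : Matrix n n ℂ}
    (h1 : ρ₁.PosSemidef) (hle : (ρ₂ - ρ₁).PosSemidef) (hτ : τ.PosSemidef) :
    fid ρ₁ τ ≤ fid ρ₂ τ := by
  have h2 : ρ₂.PosSemidef := by
    have := hle.add h1
    rwa [sub_add_cancel] at this
  set Pb := matSqrt ρ₂ with hPbdef
  have hPb : Pb.PosSemidef := matSqrt_psd h2
  have hPbherm : Pbᴴ = Pb := matSqrt_herm h2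
  have hPb2 : Pb * Pb = ρ₂ := matSqrt_mul_self h2
  obtain ⟨p2⟩ := exists_suppPack hPb
  have hone_sub_herm : ((1 : Matrix n n ℂ) - p2.Pi)ᴴ = (1 : Matrix n n ℂ) - p2.Pi := by
    rw [Matrix.conjTranspose_sub, Matrix.conjTranspose_one, p2.hPi]
  have hz2 : ((1 : Matrix n n ℂ) - p2.Pi) * ρ₂ * ((1 : Matrix n n ℂ) - p2.Pi)ᴴ = 0 := by
    calc ((1 : Matrix n n ℂ) - p2.Pi) * ρ₂ * ((1 : Matrix n n ℂ) - p2.Pi)ᴴ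
        = (((1 : Matrix n n ℂ) - p2.Pi) * Pb) * (Pb * ((1 : Matrix n n ℂ) - p2.Pi)ᴴ) := by
          rw [← hPb2]; simp only [Matrix.mul_assoc]
      _ = 0 := by rw [one_sub_proj_mul p2.PiP, Matrix.zero_mul]
  have hX0 : ((1 : Matrix n n ℂ) - p2.Pi) * ρ₁ * ((1 : Matrix n n ℂ) - p2.Pi)ᴴ = 0 := by
    set X := ((1 : Matrix n n ℂ) - p2.Pi) * ρ₁ * ((1 : Matrix n n ℂ) - p2.Pi)ᴴ with hXdef
    set Y := ((1 : Matrix n n ℂ) - p2.Pi) * (ρ₂ - ρ₁) * ((1 : Matrix n n ℂ) - p2.Pi)ᴴ with hYdef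
    have hXpsd : X.PosSemidef := h1.mul_mul_conjTranspose_same _
    have hYpsd : Y.PosSemidef := hle.mul_mul_conjTranspose_same _
    have hsum : X + Y = 0 := by
      have hcanc : ρ₁ + (ρ₂ - ρ₁) = ρ₂ := by abel
      rw [hXdef, hYdef, ← Matrix.add_mul, ← Matrix.mul_add, hcanc, hz2]
    have htr : X.trace.re = 0 := by
      have h01 := psd_trace_re_nonneg hXpsd
      have h02 := psd_trace_re_nonneg hYpsd
      have h03 : X.trace.re + Y.trace.re = 0 := by
        rw [← Complex.add_re, ← Matrix.trace_add, hsum, Matrix.trace_zero]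
        rfl
      linarith
    exact psd_eq_zero_of_trace hXpsd htr
  have hPiρ₁ : p2.Pi * ρ₁ = ρ₁ := by
    have hZ := absorb (M := matSqrt ρ₁) (P := p2.Pi) ?_
    · calc p2.Pi * ρ₁ = p2.Pi * (matSqrt ρ₁ * (matSqrt ρ₁)ᴴ) := by rw [sq_fac h1]
        _ = (p2.Pi * matSqrt ρ₁) * (matSqrt ρ₁)ᴴ := by rw [Matrix.mul_assoc]
        _ = matSqrt ρ₁ * (matSqrt ρ₁)ᴴ := by rw [hZ]
        _ = ρ₁ := sq_fac h1
    · rw [sq_fac h1]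
      exact hX0
  have hρ₁Pi : ρ₁ * p2.Pi = ρ₁ := by
    have := congrArg Matrix.conjTranspose hPiρ₁
    rwa [Matrix.conjTranspose_mul, p2.hPi, h1.1.eq] at this
  set Cm := p2.Q * ρ₁ * p2.Q with hCmdef
  have hCmpsd : Cm.PosSemidef := by
    have := h1.mul_mul_conjTranspose_same p2.Q
    rwa [p2.hQ] at this
  have hCmfac : Pb * Cm * Pb = ρ₁ := by
    calc Pb * (p2.Q * ρ₁ * p2.Q) * Pb = (Pb * p2.Q) * ρ₁ * (p2.Q * Pb) := by
          simp only [Matrix.mul_assoc]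
      _ = p2.Pi * ρ₁ * p2.Pi := by rw [p2.PQ, p2.QP]
      _ = ρ₁ := by rw [hPiρ₁, hρ₁Pi]
  have hCm_le : ((1 : Matrix n n ℂ) - Cm).PosSemidef := by
    have hQρ₂Q : p2.Q * ρ₂ * p2.Q = p2.Pi := by
      calc p2.Q * ρ₂ * p2.Q = (p2.Q * Pb) * (Pb * p2.Q) := by
            rw [← hPb2]; simp only [Matrix.mul_assoc]
        _ = p2.Pi * p2.Pi := by rw [p2.QP, p2.PQ]
        _ = p2.Pi := p2.idem
    have hPimCm : (p2.Pi - Cm).PosSemidef := by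
      have := hle.mul_mul_conjTranspose_same p2.Q
      rw [p2.hQ, Matrix.mul_sub, Matrix.sub_mul, hQρ₂Q] at this
      rwa [hCmdef]
    have hsplit : (1 : Matrix n n ℂ) - Cm = ((1 : Matrix n n ℂ) - p2.Pi) + (p2.Pi - Cm) := by
      abel
    rw [hsplit]
    exact (proj_le_one p2.hPi p2.idem).add hPimCm
  set Sm := matSqrt Cm with hSmdef
  have hSmherm : Smᴴ = Sm := matSqrt_herm hCmpsd
  have hSm2 : Sm * Sm = Cm := matSqrt_mul_self hCmpsd
  have hSmctr : Ctr Sm := by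
    unfold Ctr
    rw [hSmherm, hSm2]
    exact hCm_le
  set M' := Pb * Sm with hM'def
  have hM'fac : M' * M'ᴴ = ρ₁ := by
    calc (Pb * Sm) * (Pb * Sm)ᴴ = Pb * (Sm * Smᴴ) * Pbᴴ := by
          rw [Matrix.conjTranspose_mul]; simp only [Matrix.mul_assoc]
      _ = Pb * Cm * Pb := by rw [hSmherm, hSm2, hPbherm]
      _ = ρ₁ := hCmfac
  obtain ⟨K, hK, hval⟩ := master_ach M' (matSqrt τ)
  rw [hM'fac, sq_fac hτ] at hval
  rw [← hval]
  have htr : (M'ᴴ * matSqrt τ * K).trace = (Pb * matSqrt τ * (K * Sm)).trace := by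
    have hM'T : M'ᴴ = Sm * Pb := by
      rw [hM'def, Matrix.conjTranspose_mul, hSmherm, hPbherm]
    calc (M'ᴴ * matSqrt τ * K).trace = (Sm * (Pb * matSqrt τ * K)).trace := by
          rw [hM'T]; congr 1; simp only [Matrix.mul_assoc]
      _ = ((Pb * matSqrt τ * K) * Sm).trace := Matrix.trace_mul_comm _ _
      _ = (Pb * matSqrt τ * (K * Sm)).trace := by
          congr 1; simp only [Matrix.mul_assoc]
  rw [htr]
  have hub := master_ub Pb (matSqrt τ) (ctr_mul hK hSmctr)
  rwa [hPbherm, hPb2, sq_fac hτ] at hub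

lemma fid_extension {ρbar : Matrix (A × B) (A × B) ℂ} {ρ : Matrix (A × B × C) (A × B × C) ℂ}
    (hbar : ρbar.PosSemidef) (hρ : ρ.PosSemidef) :
    ∃ ρ' : Matrix (A × B × C) (A × B × C) ℂ, ρ'.PosSemidef ∧
      (ρbar - ptrC ρ').PosSemidef ∧ fid ρbar (ptrC ρ) ≤ fid ρ' ρ := by
  classical
  set Nb := matSqrt ρbar with hNbdef
  set M := matSqrt ρ with hMdef
  obtain ⟨K, hK, hval⟩ := master_ach Nb (resh M)
  rw [sq_fac hbar, resh_mul_conjT, sq_fac hρ] at hval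
  set T := Nb * Kᴴ with hTdef
  set L : Matrix (A × B × C) (A × B × C) ℂ :=
    Matrix.of fun y r => T (y.1, y.2.1) (y.2.2, r) with hLdef
  have hreshL : resh L = T := by ext p q; rfl
  refine ⟨L * Lᴴ, Matrix.posSemidef_self_mul_conjTranspose L, ?_, ?_⟩
  · have h1 : ptrC (L * Lᴴ) = T * Tᴴ := by rw [← resh_mul_conjT, hreshL]
    rw [h1]
    have h2 : T * Tᴴ = Nb * (Kᴴ * K) * Nbᴴ := by
      rw [hTdef, Matrix.conjTranspose_mul, Matrix.conjTranspose_conjTranspose]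
      simp only [Matrix.mul_assoc]
    have h3 : ρbar - T * Tᴴ
        = Nb * ((1 : Matrix (A × B) (A × B) ℂ) - Kᴴ * K) * Nbᴴ := by
      calc ρbar - T * Tᴴ = Nb * Nbᴴ - Nb * (Kᴴ * K) * Nbᴴ := by rw [sq_fac hbar, h2]
        _ = Nb * ((1 : Matrix (A × B) (A × B) ℂ) - Kᴴ * K) * Nbᴴ := by
            rw [Matrix.mul_sub, Matrix.mul_one, Matrix.sub_mul]
    rw [h3]
    exact hK.mul_mul_conjTranspose_same Nb
  · have hub := master_ub L M ctr_one
    rw [Matrix.mul_one, sq_fac hρ] at hub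
    have htr : (Lᴴ * M).trace = (Nbᴴ * resh M * K).trace := by
      have h4 := trace_unresh T M
      have h5 : Tᴴ = K * Nbᴴ := by
        rw [hTdef, Matrix.conjTranspose_mul, Matrix.conjTranspose_conjTranspose]
      calc (Lᴴ * M).trace = (Tᴴ * resh M).trace := h4
        _ = ((K * Nbᴴ) * resh M).trace := by rw [h5]
        _ = (Nbᴴ * resh M * K).trace := (Matrix.trace_mul_cycle Nbᴴ (resh M) K).symm
    rw [← hval, ← htr]
    exact hub

end AuxDpi
section AuxHmax

variable {A : Type*} [Fintype A] [DecidableEq A] {Bt : Type*} [Fintype Bt] [DecidableEq Bt]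

lemma psd_trace_pos {n : Type*} [Fintype n] [DecidableEq n] {M : Matrix n n ℂ}
    (h : M.PosSemidef) (hne : M ≠ 0) : 0 < M.trace.re :=
  (psd_trace_re_nonneg h).lt_of_ne fun heq => hne (psd_eq_zero_of_trace h heq.symm)

lemma unif_isState [Nonempty Bt] :
    IsState ((((Fintype.card Bt : ℝ)⁻¹ : ℝ) : ℂ) • (1 : Matrix Bt Bt ℂ)) := by
  have hcard : (0 : ℝ) < (Fintype.card Bt : ℝ) := by
    exact_mod_cast Fintype.card_pos
  constructor
  · exact psd_smul Matrix.PosSemidef.one (by positivity)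
  · rw [Matrix.trace_smul, Matrix.trace_one, smul_eq_mul]
    push_cast
    field_simp

lemma fid_one_kron_le {ρ' : Matrix (A × Bt) (A × Bt) ℂ} (h : ρ'.PosSemidef)
    {σ : Matrix Bt Bt ℂ} (hσ : IsState σ) :
    fid ρ' ((1 : Matrix A A ℂ) ⊗ₖ σ)
      ≤ Real.sqrt (ρ'.trace.re) * Real.sqrt (Fintype.card A) := by
  have hb := fid_le h (psd_one_kron hσ.1)
  have htr : ((1 : Matrix A A ℂ) ⊗ₖ σ).trace.re = (Fintype.card A : ℝ) := by
    rw [trace_one_kron, hσ.2, mul_one]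
    simp
  rwa [htr] at hb

lemma hmax_set_nonempty [Nonempty Bt] (ρ' : Matrix (A × Bt) (A × Bt) ℂ) :
    {f : ℝ | ∃ σ : Matrix Bt Bt ℂ, IsState σ ∧
      f = fid ρ' ((1 : Matrix A A ℂ) ⊗ₖ σ)}.Nonempty :=
  ⟨_, _, unif_isState, rfl⟩

lemma hmax_set_bdd {ρ' : Matrix (A × Bt) (A × Bt) ℂ} (h : ρ'.PosSemidef) :
    BddAbove {f : ℝ | ∃ σ : Matrix Bt Bt ℂ, IsState σ ∧
      f = fid ρ' ((1 : Matrix A A ℂ) ⊗ₖ σ)} := by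
  refine ⟨Real.sqrt (ρ'.trace.re) * Real.sqrt (Fintype.card A), ?_⟩
  rintro f ⟨σ, hσ, rfl⟩
  exact fid_one_kron_le h hσ

lemma hmax_sSup_lb [Nonempty Bt] {ρ' : Matrix (A × Bt) (A × Bt) ℂ} (h : ρ'.PosSemidef) :
    Real.sqrt (ρ'.trace.re) / Real.sqrt (Fintype.card Bt)
      ≤ sSup {f : ℝ | ∃ σ : Matrix Bt Bt ℂ, IsState σ ∧
          f = fid ρ' ((1 : Matrix A A ℂ) ⊗ₖ σ)} := by
  have hcard : (0 : ℝ) < (Fintype.card Bt : ℝ) := by exact_mod_cast Fintype.card_pos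
  have hmem : fid ρ' ((1 : Matrix A A ℂ) ⊗ₖ
      ((((Fintype.card Bt : ℝ)⁻¹ : ℝ) : ℂ) • (1 : Matrix Bt Bt ℂ)))
      ∈ {f : ℝ | ∃ σ : Matrix Bt Bt ℂ, IsState σ ∧
          f = fid ρ' ((1 : Matrix A A ℂ) ⊗ₖ σ)} := ⟨_, unif_isState, rfl⟩
  have hval : fid ρ' ((1 : Matrix A A ℂ) ⊗ₖ
      ((((Fintype.card Bt : ℝ)⁻¹ : ℝ) : ℂ) • (1 : Matrix Bt Bt ℂ)))
      = Real.sqrt ((Fintype.card Bt : ℝ)⁻¹) * ((matSqrt ρ').trace).re := by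
    rw [Matrix.kronecker_smul, Matrix.one_kronecker_one]
    exact fid_smul_one_right h (by positivity)
  have hlow : Real.sqrt (ρ'.trace.re) / Real.sqrt (Fintype.card Bt)
      ≤ Real.sqrt ((Fintype.card Bt : ℝ)⁻¹) * ((matSqrt ρ').trace).re := by
    rw [Real.sqrt_inv, div_eq_inv_mul]
    exact mul_le_mul_of_nonneg_left (sqrt_trace_le_trace_matSqrt h) (by positivity)
  calc Real.sqrt (ρ'.trace.re) / Real.sqrt (Fintype.card Bt)
      ≤ Real.sqrt ((Fintype.card Bt : ℝ)⁻¹) * ((matSqrt ρ').trace).re := hlow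
    _ = fid ρ' ((1 : Matrix A A ℂ) ⊗ₖ
        ((((Fintype.card Bt : ℝ)⁻¹ : ℝ) : ℂ) • (1 : Matrix Bt Bt ℂ))) := hval.symm
    _ ≤ sSup _ := le_csSup (hmax_set_bdd h) hmem

lemma hmax_zero [Nonempty Bt] : Hmax (0 : Matrix (A × Bt) (A × Bt) ℂ) = 0 := by
  unfold Hmax
  have hset : {f : ℝ | ∃ σ : Matrix Bt Bt ℂ, IsState σ ∧
      f = fid (0 : Matrix (A × Bt) (A × Bt) ℂ) ((1 : Matrix A A ℂ) ⊗ₖ σ)} = {0} := by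
    ext f
    constructor
    · rintro ⟨σ, hσ, rfl⟩
      simp [fid_zero_left]
    · rintro rfl
      exact ⟨_, unif_isState, (fid_zero_left _).symm⟩
  rw [hset, csSup_singleton, Real.logb_zero, mul_zero]

lemma hmax_mono {A B C : Type*} [Fintype A] [DecidableEq A] [Fintype B] [DecidableEq B]
    [Fintype C] [DecidableEq C] [Nonempty B] [Nonempty C]
    {ρ₁ : Matrix (A × B × C) (A × B × C) ℂ} {ρ₂ : Matrix (A × B) (A × B) ℂ}
    (h1 : ρ₁.PosSemidef) (h2 : ρ₂.PosSemidef) (hle : (ρ₂ - ptrC ρ₁).PosSemidef)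
    (hz : ρ₁ = 0 → ρ₂ = 0) : Hmax ρ₁ ≤ Hmax ρ₂ := by
  by_cases h0 : ρ₁ = 0
  · rw [h0, hz h0, hmax_zero, hmax_zero]
  unfold Hmax
  have htr1 : 0 < ρ₁.trace.re := psd_trace_pos h1 h0
  have hS1le : ∀ f ∈ {f : ℝ | ∃ σ : Matrix (B × C) (B × C) ℂ, IsState σ ∧
      f = fid ρ₁ ((1 : Matrix A A ℂ) ⊗ₖ σ)},
      f ≤ sSup {f : ℝ | ∃ σ : Matrix B B ℂ, IsState σ ∧
        f = fid ρ₂ ((1 : Matrix A A ℂ) ⊗ₖ σ)} := by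
    rintro f ⟨σ, hσ, rfl⟩
    have step1 : fid ρ₁ ((1 : Matrix A A ℂ) ⊗ₖ σ)
        ≤ fid (ptrC ρ₁) ((1 : Matrix A A ℂ) ⊗ₖ ptrC2 σ) := by
      have hdpi := fid_dpi h1 (psd_one_kron hσ.1)
      rwa [ptrC_kron] at hdpi
    have hσ' : IsState (ptrC2 σ) := ⟨ptrC2_psd hσ.1, by rw [trace_ptrC2, hσ.2]⟩
    have step2 : fid (ptrC ρ₁) ((1 : Matrix A A ℂ) ⊗ₖ ptrC2 σ)
        ≤ fid ρ₂ ((1 : Matrix A A ℂ) ⊗ₖ ptrC2 σ) :=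
      fid_mono_left (ptrC_psd h1) hle (psd_one_kron hσ'.1)
    have step3 : fid ρ₂ ((1 : Matrix A A ℂ) ⊗ₖ ptrC2 σ) ≤ sSup _ :=
      le_csSup (hmax_set_bdd h2) ⟨_, hσ', rfl⟩
    linarith
  have hsup_le : sSup {f : ℝ | ∃ σ : Matrix (B × C) (B × C) ℂ, IsState σ ∧
      f = fid ρ₁ ((1 : Matrix A A ℂ) ⊗ₖ σ)}
      ≤ sSup {f : ℝ | ∃ σ : Matrix B B ℂ, IsState σ ∧
        f = fid ρ₂ ((1 : Matrix A A ℂ) ⊗ₖ σ)} :=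
    csSup_le (hmax_set_nonempty ρ₁) hS1le
  have hcardBC : (0 : ℝ) < (Fintype.card (B × C) : ℝ) := by exact_mod_cast Fintype.card_pos
  have hpos : 0 < sSup {f : ℝ | ∃ σ : Matrix (B × C) (B × C) ℂ, IsState σ ∧
      f = fid ρ₁ ((1 : Matrix A A ℂ) ⊗ₖ σ)} := by
    refine lt_of_lt_of_le ?_ (hmax_sSup_lb h1)
    have h01 : 0 < Real.sqrt (ρ₁.trace.re) := Real.sqrt_pos.mpr htr1
    positivity
  have hlog := Real.logb_le_logb_of_le (by norm_num : (1:ℝ) < 2) hpos hsup_le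
  linarith

end AuxHmax
section AuxFinal

lemma pdist_eq {n : Type*} [Fintype n] [DecidableEq n] (ρ'' τ : Matrix n n ℂ)
    (hτ : τ.trace = 1) : pDist ρ'' τ = Real.sqrt (1 - (fid ρ'' τ) ^ 2) := by
  unfold pDist genFid
  rw [hτ]
  simp

lemma pdist_le_one {n : Type*} [Fintype n] [DecidableEq n] (ρ'' τ : Matrix n n ℂ) :
    pDist ρ'' τ ≤ 1 := by
  unfold pDist
  have h1 : 1 - (genFid ρ'' τ) ^ 2 ≤ 1 := by nlinarith [sq_nonneg (genFid ρ'' τ)]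
  calc Real.sqrt (1 - (genFid ρ'' τ) ^ 2) ≤ Real.sqrt 1 := Real.sqrt_le_sqrt h1
    _ = 1 := Real.sqrt_one

lemma smooth_set_not_bdd {A Bt : Type*} [Fintype A] [DecidableEq A] [Fintype Bt]
    [DecidableEq Bt] [Nonempty A] [Nonempty Bt] {τ : Matrix (A × Bt) (A × Bt) ℂ}
    (hτ : IsState τ) {ε : ℝ} (hε : 1 ≤ ε) :
    ¬ BddBelow {h : ℝ | ∃ ρ'' : Matrix (A × Bt) (A × Bt) ℂ,
      IsSubState ρ'' ∧ pDist ρ'' τ ≤ ε ∧ h = Hmax ρ''} := by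
  rintro ⟨b, hb⟩
  have hcardA : (0 : ℝ) < (Fintype.card A : ℝ) := by exact_mod_cast Fintype.card_pos
  have hcardBt : (0 : ℝ) < (Fintype.card Bt : ℝ) := by exact_mod_cast Fintype.card_pos
  set sA := Real.sqrt (Fintype.card A) with hsAdef
  have hsA : 0 < sA := Real.sqrt_pos.mpr hcardA
  set δ : ℝ := min 1 ((2 : ℝ) ^ (((b - 1) / 2 - Real.logb 2 sA - 1) : ℝ)) with hδdef
  have hδpos : 0 < δ := lt_min one_pos (Real.rpow_pos_of_pos (by norm_num) _)
  have hδ1 : δ ≤ 1 := min_le_left _ _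
  set t : ℝ := δ ^ 2 with htdef
  have htpos : 0 < t := by positivity
  have ht1 : t ≤ 1 := by nlinarith
  set ρ'' : Matrix (A × Bt) (A × Bt) ℂ := ((t : ℝ) : ℂ) • τ with hρ''def
  have hρ''psd : ρ''.PosSemidef := psd_smul hτ.1 htpos.le
  have hρ''tr : ρ''.trace.re = t := by
    rw [hρ''def, Matrix.trace_smul, hτ.2, smul_eq_mul, mul_one, Complex.ofReal_re]
  have hmem : Hmax ρ'' ∈ {h : ℝ | ∃ ρ'' : Matrix (A × Bt) (A × Bt) ℂ,
      IsSubState ρ'' ∧ pDist ρ'' τ ≤ ε ∧ h = Hmax ρ''} := by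
    refine ⟨ρ'', ⟨hρ''psd, by rw [hρ''tr]; exact ht1⟩, le_trans (pdist_le_one _ _) hε, rfl⟩
  have hbound := hb hmem
  -- now bound Hmax ρ'' from above
  have hsup_le : sSup {f : ℝ | ∃ σ : Matrix Bt Bt ℂ, IsState σ ∧
      f = fid ρ'' ((1 : Matrix A A ℂ) ⊗ₖ σ)} ≤ δ * sA := by
    apply csSup_le (hmax_set_nonempty ρ'')
    rintro f ⟨σ, hσ, rfl⟩
    have h1 : fid ρ'' ((1 : Matrix A A ℂ) ⊗ₖ σ)
        = Real.sqrt t * fid τ ((1 : Matrix A A ℂ) ⊗ₖ σ) :=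
      fid_smul_left hτ.1 (psd_one_kron hσ.1) htpos.le
    have h2 : fid τ ((1 : Matrix A A ℂ) ⊗ₖ σ) ≤ sA := by
      have := fid_one_kron_le hτ.1 hσ
      rwa [hτ.2, Complex.one_re, Real.sqrt_one, one_mul] at this
    have h3 : Real.sqrt t = δ := by
      rw [htdef, Real.sqrt_sq hδpos.le]
    rw [h1, h3]
    exact mul_le_mul_of_nonneg_left h2 hδpos.le
  have hsup_pos : 0 < sSup {f : ℝ | ∃ σ : Matrix Bt Bt ℂ, IsState σ ∧
      f = fid ρ'' ((1 : Matrix A A ℂ) ⊗ₖ σ)} := by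
    refine lt_of_lt_of_le ?_ (hmax_sSup_lb hρ''psd)
    rw [hρ''tr]
    have := Real.sqrt_pos.mpr htpos
    positivity
  have hHb : Hmax ρ'' ≤ 2 * Real.logb 2 (δ * sA) := by
    unfold Hmax
    have := Real.logb_le_logb_of_le (by norm_num : (1:ℝ) < 2) hsup_pos hsup_le
    linarith
  have hlogδ : Real.logb 2 δ ≤ (b - 1) / 2 - Real.logb 2 sA - 1 := by
    have h4 := Real.logb_le_logb_of_le (by norm_num : (1:ℝ) < 2) hδpos
      (min_le_right 1 ((2 : ℝ) ^ (((b - 1) / 2 - Real.logb 2 sA - 1) : ℝ)))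
    rwa [Real.logb_rpow (by norm_num) (by norm_num)] at h4
  have hsplit : Real.logb 2 (δ * sA) = Real.logb 2 δ + Real.logb 2 sA :=
    Real.logb_mul (ne_of_gt hδpos) (ne_of_gt hsA)
  have hfinal : Hmax ρ'' ≤ b - 3 := by
    rw [hsplit] at hHb
    linarith
  linarith

end AuxFinal
lemma fid_lb_of_pdist {m : Type*} [Fintype m] [DecidableEq m] {ε : ℝ} (hε : 0 ≤ ε)
    (ρ'' τ : Matrix m m ℂ) (hτ1 : τ.trace = 1) (hτpsd : τ.PosSemidef)
    (hpd : pDist ρ'' τ ≤ ε) : Real.sqrt (1 - ε ^ 2) ≤ fid ρ'' τ := by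
  rw [pdist_eq _ _ hτ1] at hpd
  have hf0 : 0 ≤ fid ρ'' τ := fid_nonneg hτpsd
  have h1 : 1 - (fid ρ'' τ) ^ 2 ≤ ε ^ 2 := by
    by_contra hlt
    push_neg at hlt
    have := (Real.lt_sqrt hε).mpr hlt
    linarith
  have h2 : 1 - ε ^ 2 ≤ (fid ρ'' τ) ^ 2 := by linarith
  calc Real.sqrt (1 - ε ^ 2) ≤ Real.sqrt ((fid ρ'' τ) ^ 2) := Real.sqrt_le_sqrt h2
    _ = fid ρ'' τ := Real.sqrt_sq hf0

/-- Data processing for the smooth max-entropy. -/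
theorem data_processing_smooth_max {A B C : Type*}
    [Fintype A] [DecidableEq A] [Fintype B] [DecidableEq B] [Fintype C] [DecidableEq C]
    (ρ : Matrix (A × B × C) (A × B × C) ℂ) (hρ : IsState ρ) (ε : ℝ) (hε : 0 ≤ ε) :
    sHmax ε ρ ≤
      sHmax ε (Matrix.of fun (p q : A × B) => ∑ c, ρ (p.1, p.2, c) (q.1, q.2, c)) := by
  classical
  obtain ⟨hρpsd, hρtr⟩ := hρ
  have hne : Nonempty (A × B × C) := by
    by_contra h
    rw [not_nonempty_iff] at h
    have h0 : ρ.trace = 0 := by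
      rw [Matrix.trace, Finset.univ_eq_empty, Finset.sum_empty]
    rw [h0] at hρtr
    exact one_ne_zero hρtr.symm
  obtain ⟨x⟩ := hne
  haveI : Nonempty A := ⟨x.1⟩
  haveI : Nonempty B := ⟨x.2.1⟩
  haveI : Nonempty C := ⟨x.2.2⟩
  have hABeq : (Matrix.of fun (p q : A × B) =>
      ∑ c, ρ (p.1, p.2, c) (q.1, q.2, c)) = ptrC ρ := rfl
  rw [hABeq]
  have hABpsd : (ptrC ρ).PosSemidef := ptrC_psd hρpsd
  have hABtr : (ptrC ρ).trace = 1 := by rw [trace_ptrC, hρtr]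
  unfold sHmax
  by_cases hε1 : 1 ≤ ε
  · rw [Real.sInf_of_not_bddBelow (smooth_set_not_bdd ⟨hρpsd, hρtr⟩ hε1),
      Real.sInf_of_not_bddBelow (smooth_set_not_bdd ⟨hABpsd, hABtr⟩ hε1)]
  push_neg at hε1
  have hγsq : 0 < 1 - ε ^ 2 := by nlinarith
  have hγpos : 0 < Real.sqrt (1 - ε ^ 2) := Real.sqrt_pos.mpr hγsq
  have hcardBC : (0 : ℝ) < (Fintype.card (B × C) : ℝ) := by exact_mod_cast Fintype.card_pos
  -- BddBelow of the LHS smoothing set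
  have hbdd : BddBelow {h : ℝ | ∃ ρ'' : Matrix (A × B × C) (A × B × C) ℂ,
      IsSubState ρ'' ∧ pDist ρ'' ρ ≤ ε ∧ h = Hmax ρ''} := by
    refine ⟨2 * Real.logb 2 (Real.sqrt (1 - ε ^ 2) / Real.sqrt (Fintype.card (B × C))), ?_⟩
    rintro h'' ⟨ρ'', hsub'', hpd'', rfl⟩
    have hγ'' : Real.sqrt (1 - ε ^ 2) ≤ fid ρ'' ρ := fid_lb_of_pdist hε ρ'' ρ hρtr hρpsd hpd''
    have htr'' : Real.sqrt (1 - ε ^ 2) ^ 2 ≤ ρ''.trace.re := by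
      have hfle := fid_le hsub''.1 hρpsd
      rw [show ρ.trace.re = 1 by rw [hρtr]; rfl, Real.sqrt_one, mul_one] at hfle
      have h0 := psd_trace_re_nonneg hsub''.1
      nlinarith [Real.sq_sqrt h0, Real.sqrt_nonneg (ρ''.trace.re)]
    have hγtr : Real.sqrt (1 - ε ^ 2) ≤ Real.sqrt (ρ''.trace.re) := by
      have := Real.sqrt_le_sqrt htr''
      rwa [Real.sqrt_sq hγpos.le] at this
    have hlow : Real.sqrt (1 - ε ^ 2) / Real.sqrt (Fintype.card (B × C))
        ≤ sSup {f : ℝ | ∃ σ : Matrix (B × C) (B × C) ℂ, IsState σ ∧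
            f = fid ρ'' ((1 : Matrix A A ℂ) ⊗ₖ σ)} := by
      refine le_trans ?_ (hmax_sSup_lb hsub''.1)
      gcongr
    have hlog := Real.logb_le_logb_of_le (by norm_num : (1:ℝ) < 2)
      (by positivity : 0 < Real.sqrt (1 - ε ^ 2) / Real.sqrt (Fintype.card (B × C))) hlow
    unfold Hmax
    linarith
  apply le_csInf
  · exact ⟨Hmax (ptrC ρ), ptrC ρ, ⟨hABpsd, by rw [hABtr]; norm_num⟩,
      by rw [pdist_eq _ _ hABtr, fid_self hABpsd, hABtr]; simpa using hε, rfl⟩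
  rintro h ⟨ρbar, hbarsub, hbarpd, rfl⟩
  obtain ⟨ρ', hρ'psd, hρ'le, hρ'fid⟩ := fid_extension hbarsub.1 hρpsd
  have hγbar : Real.sqrt (1 - ε ^ 2) ≤ fid ρbar (ptrC ρ) :=
    fid_lb_of_pdist hε ρbar (ptrC ρ) hABtr hABpsd hbarpd
  have hγρ' : Real.sqrt (1 - ε ^ 2) ≤ fid ρ' ρ := le_trans hγbar hρ'fid
  have hfidnn : 0 ≤ fid ρbar (ptrC ρ) := fid_nonneg hABpsd
  have hρ'sub : IsSubState ρ' := by
    refine ⟨hρ'psd, ?_⟩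
    calc ρ'.trace.re = (ptrC ρ').trace.re := by rw [trace_ptrC]
      _ ≤ ρbar.trace.re := loewner_trace_mono hρ'le
      _ ≤ 1 := hbarsub.2
  have hρ'pd : pDist ρ' ρ ≤ ε := by
    rw [pdist_eq _ _ hρtr]
    rw [pdist_eq _ _ hABtr] at hbarpd
    have hmono : 1 - (fid ρ' ρ) ^ 2 ≤ 1 - (fid ρbar (ptrC ρ)) ^ 2 := by
      nlinarith [hρ'fid, hfidnn]
    calc Real.sqrt (1 - (fid ρ' ρ) ^ 2) ≤ Real.sqrt (1 - (fid ρbar (ptrC ρ)) ^ 2) :=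
          Real.sqrt_le_sqrt hmono
      _ ≤ ε := hbarpd
  have hhm : Hmax ρ' ≤ Hmax ρbar := by
    apply hmax_mono hρ'psd hbarsub.1 hρ'le
    intro h0
    exfalso
    rw [h0, fid_zero_left] at hγρ'
    linarith
  calc sInf {h : ℝ | ∃ ρ'' : Matrix (A × B × C) (A × B × C) ℂ,
      IsSubState ρ'' ∧ pDist ρ'' ρ ≤ ε ∧ h = Hmax ρ''} ≤ Hmax ρ' :=
        csInf_le hbdd ⟨ρ', hρ'sub, hρ'pd, rfl⟩
    _ ≤ Hmax ρbar := hhm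

end Paper
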